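/- arXiv:2107.05259 — 2 statements merged into one kernel-verified Lean document; each statement's English description precedes it below -/
import Mathlib

section
/- Every magic labelling of the cube with nonnegative integer labels can be written uniquely in exactly one of the eight forms: (t1) k1α1+k2α2+k3α3+k4α4+k5α5+k6α6; (t2) α7+k1α1+k2α2+k3α3+k4α5+k5α6+k6α7; (t31) α9+k1α2+k2α3+k3α4+k4α6+k5α7+k6α9; (t32) (α1+α9)+k1α1+k2α3+k3α4+k4α6+k5α7+k6α9; (t33) (α6+α8)+k1α1+k2α2+k3α4+k4α6+k5α7+k6α8; (t34) α8+k1α1+k2α2+k3α3+k4α4+k5α7+k6α8; (t351) (α4+α7)+k1α1+k2α2+k3α3+k4α4+k5α6+k6α7; (t352) T+k1α1+k2α2+k3α3+k4α4+k5α6+k6α7, where all k_i ∈ N. -/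
def IsMagic (x : Fin 12 → ℕ) (r : ℕ) : Prop :=
  x 0 + x 1 + x 8 = r ∧ x 0 + x 2 + x 9 = r ∧
  x 1 + x 3 + x 11 = r ∧ x 2 + x 3 + x 10 = r ∧
  x 4 + x 5 + x 8 = r ∧ x 4 + x 6 + x 9 = r ∧
  x 5 + x 7 + x 11 = r ∧ x 6 + x 7 + x 10 = r

def a1 : Fin 12 → ℕ := ![0,1,1,0,1,0,0,1,0,0,0,0]
def a2 : Fin 12 → ℕ := ![1,0,0,1,0,1,1,0,0,0,0,0]
def a3 : Fin 12 → ℕ := ![1,0,0,0,1,0,0,0,0,0,1,1]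
def a4 : Fin 12 → ℕ := ![0,1,0,0,0,1,0,0,0,1,1,0]
def a5 : Fin 12 → ℕ := ![1,0,0,1,1,0,0,1,0,0,0,0]
def a6 : Fin 12 → ℕ := ![0,0,0,1,0,0,0,1,1,1,0,0]
def a7 : Fin 12 → ℕ := ![0,0,1,0,0,0,1,0,1,0,0,1]
def a8 : Fin 12 → ℕ := ![0,1,1,0,0,1,1,0,0,0,0,0]
def a9 : Fin 12 → ℕ := ![0,0,0,0,0,0,0,0,1,1,1,1]
def T : Fin 12 → ℕ := fun _ => 1

/-- The shift vector of each of the eight types t1, t2, t31, t32, t33, t34, t351, t352. -/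
def base : Fin 8 → (Fin 12 → ℕ) :=
  ![0, a7, a9, a1 + a9, a6 + a8, a8, a4 + a7, T]

/-- The six generators of each of the eight types. -/
def gens : Fin 8 → Fin 6 → (Fin 12 → ℕ) :=
  ![![a1, a2, a3, a4, a5, a6],
    ![a1, a2, a3, a5, a6, a7],
    ![a2, a3, a4, a6, a7, a9],
    ![a1, a3, a4, a6, a7, a9],
    ![a1, a2, a4, a6, a7, a8],
    ![a1, a2, a3, a4, a7, a8],
    ![a1, a2, a3, a4, a6, a7],
    ![a1, a2, a3, a4, a6, a7]]

/-- The labelling of type `t` with coefficients `k`. -/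
def rep (t : Fin 8) (k : Fin 6 → ℕ) : Fin 12 → ℕ :=
  base t + ∑ i, k i • gens t i


lemma bv0_0 : base 0 (0 : Fin 12) = 0 := rfl
lemma bv0_1 : base 0 (1 : Fin 12) = 0 := rfl
lemma bv0_2 : base 0 (2 : Fin 12) = 0 := rfl
lemma bv0_3 : base 0 (3 : Fin 12) = 0 := rfl
lemma bv0_4 : base 0 (4 : Fin 12) = 0 := rfl
lemma bv0_5 : base 0 (5 : Fin 12) = 0 := rfl
lemma bv0_6 : base 0 (6 : Fin 12) = 0 := rfl
lemma bv0_7 : base 0 (7 : Fin 12) = 0 := rfl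
lemma bv0_8 : base 0 (8 : Fin 12) = 0 := rfl
lemma bv0_9 : base 0 (9 : Fin 12) = 0 := rfl
lemma bv0_10 : base 0 (10 : Fin 12) = 0 := rfl
lemma bv0_11 : base 0 (11 : Fin 12) = 0 := rfl
lemma gv0_0_0 : gens 0 0 (0 : Fin 12) = 0 := rfl
lemma gv0_0_1 : gens 0 0 (1 : Fin 12) = 1 := rfl
lemma gv0_0_2 : gens 0 0 (2 : Fin 12) = 1 := rfl
lemma gv0_0_3 : gens 0 0 (3 : Fin 12) = 0 := rfl
lemma gv0_0_4 : gens 0 0 (4 : Fin 12) = 1 := rfl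
lemma gv0_0_5 : gens 0 0 (5 : Fin 12) = 0 := rfl
lemma gv0_0_6 : gens 0 0 (6 : Fin 12) = 0 := rfl
lemma gv0_0_7 : gens 0 0 (7 : Fin 12) = 1 := rfl
lemma gv0_0_8 : gens 0 0 (8 : Fin 12) = 0 := rfl
lemma gv0_0_9 : gens 0 0 (9 : Fin 12) = 0 := rfl
lemma gv0_0_10 : gens 0 0 (10 : Fin 12) = 0 := rfl
lemma gv0_0_11 : gens 0 0 (11 : Fin 12) = 0 := rfl
lemma gv0_1_0 : gens 0 1 (0 : Fin 12) = 1 := rfl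
lemma gv0_1_1 : gens 0 1 (1 : Fin 12) = 0 := rfl
lemma gv0_1_2 : gens 0 1 (2 : Fin 12) = 0 := rfl
lemma gv0_1_3 : gens 0 1 (3 : Fin 12) = 1 := rfl
lemma gv0_1_4 : gens 0 1 (4 : Fin 12) = 0 := rfl
lemma gv0_1_5 : gens 0 1 (5 : Fin 12) = 1 := rfl
lemma gv0_1_6 : gens 0 1 (6 : Fin 12) = 1 := rfl
lemma gv0_1_7 : gens 0 1 (7 : Fin 12) = 0 := rfl
lemma gv0_1_8 : gens 0 1 (8 : Fin 12) = 0 := rfl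
lemma gv0_1_9 : gens 0 1 (9 : Fin 12) = 0 := rfl
lemma gv0_1_10 : gens 0 1 (10 : Fin 12) = 0 := rfl
lemma gv0_1_11 : gens 0 1 (11 : Fin 12) = 0 := rfl
lemma gv0_2_0 : gens 0 2 (0 : Fin 12) = 1 := rfl
lemma gv0_2_1 : gens 0 2 (1 : Fin 12) = 0 := rfl
lemma gv0_2_2 : gens 0 2 (2 : Fin 12) = 0 := rfl
lemma gv0_2_3 : gens 0 2 (3 : Fin 12) = 0 := rfl
lemma gv0_2_4 : gens 0 2 (4 : Fin 12) = 1 := rfl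
lemma gv0_2_5 : gens 0 2 (5 : Fin 12) = 0 := rfl
lemma gv0_2_6 : gens 0 2 (6 : Fin 12) = 0 := rfl
lemma gv0_2_7 : gens 0 2 (7 : Fin 12) = 0 := rfl
lemma gv0_2_8 : gens 0 2 (8 : Fin 12) = 0 := rfl
lemma gv0_2_9 : gens 0 2 (9 : Fin 12) = 0 := rfl
lemma gv0_2_10 : gens 0 2 (10 : Fin 12) = 1 := rfl
lemma gv0_2_11 : gens 0 2 (11 : Fin 12) = 1 := rfl
lemma gv0_3_0 : gens 0 3 (0 : Fin 12) = 0 := rfl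
lemma gv0_3_1 : gens 0 3 (1 : Fin 12) = 1 := rfl
lemma gv0_3_2 : gens 0 3 (2 : Fin 12) = 0 := rfl
lemma gv0_3_3 : gens 0 3 (3 : Fin 12) = 0 := rfl
lemma gv0_3_4 : gens 0 3 (4 : Fin 12) = 0 := rfl
lemma gv0_3_5 : gens 0 3 (5 : Fin 12) = 1 := rfl
lemma gv0_3_6 : gens 0 3 (6 : Fin 12) = 0 := rfl
lemma gv0_3_7 : gens 0 3 (7 : Fin 12) = 0 := rfl
lemma gv0_3_8 : gens 0 3 (8 : Fin 12) = 0 := rfl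
lemma gv0_3_9 : gens 0 3 (9 : Fin 12) = 1 := rfl
lemma gv0_3_10 : gens 0 3 (10 : Fin 12) = 1 := rfl
lemma gv0_3_11 : gens 0 3 (11 : Fin 12) = 0 := rfl
lemma gv0_4_0 : gens 0 4 (0 : Fin 12) = 1 := rfl
lemma gv0_4_1 : gens 0 4 (1 : Fin 12) = 0 := rfl
lemma gv0_4_2 : gens 0 4 (2 : Fin 12) = 0 := rfl
lemma gv0_4_3 : gens 0 4 (3 : Fin 12) = 1 := rfl
lemma gv0_4_4 : gens 0 4 (4 : Fin 12) = 1 := rfl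
lemma gv0_4_5 : gens 0 4 (5 : Fin 12) = 0 := rfl
lemma gv0_4_6 : gens 0 4 (6 : Fin 12) = 0 := rfl
lemma gv0_4_7 : gens 0 4 (7 : Fin 12) = 1 := rfl
lemma gv0_4_8 : gens 0 4 (8 : Fin 12) = 0 := rfl
lemma gv0_4_9 : gens 0 4 (9 : Fin 12) = 0 := rfl
lemma gv0_4_10 : gens 0 4 (10 : Fin 12) = 0 := rfl
lemma gv0_4_11 : gens 0 4 (11 : Fin 12) = 0 := rfl
lemma gv0_5_0 : gens 0 5 (0 : Fin 12) = 0 := rfl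
lemma gv0_5_1 : gens 0 5 (1 : Fin 12) = 0 := rfl
lemma gv0_5_2 : gens 0 5 (2 : Fin 12) = 0 := rfl
lemma gv0_5_3 : gens 0 5 (3 : Fin 12) = 1 := rfl
lemma gv0_5_4 : gens 0 5 (4 : Fin 12) = 0 := rfl
lemma gv0_5_5 : gens 0 5 (5 : Fin 12) = 0 := rfl
lemma gv0_5_6 : gens 0 5 (6 : Fin 12) = 0 := rfl
lemma gv0_5_7 : gens 0 5 (7 : Fin 12) = 1 := rfl
lemma gv0_5_8 : gens 0 5 (8 : Fin 12) = 1 := rfl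
lemma gv0_5_9 : gens 0 5 (9 : Fin 12) = 1 := rfl
lemma gv0_5_10 : gens 0 5 (10 : Fin 12) = 0 := rfl
lemma gv0_5_11 : gens 0 5 (11 : Fin 12) = 0 := rfl
lemma bv1_0 : base 1 (0 : Fin 12) = 0 := rfl
lemma bv1_1 : base 1 (1 : Fin 12) = 0 := rfl
lemma bv1_2 : base 1 (2 : Fin 12) = 1 := rfl
lemma bv1_3 : base 1 (3 : Fin 12) = 0 := rfl
lemma bv1_4 : base 1 (4 : Fin 12) = 0 := rfl
lemma bv1_5 : base 1 (5 : Fin 12) = 0 := rfl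
lemma bv1_6 : base 1 (6 : Fin 12) = 1 := rfl
lemma bv1_7 : base 1 (7 : Fin 12) = 0 := rfl
lemma bv1_8 : base 1 (8 : Fin 12) = 1 := rfl
lemma bv1_9 : base 1 (9 : Fin 12) = 0 := rfl
lemma bv1_10 : base 1 (10 : Fin 12) = 0 := rfl
lemma bv1_11 : base 1 (11 : Fin 12) = 1 := rfl
lemma gv1_0_0 : gens 1 0 (0 : Fin 12) = 0 := rfl
lemma gv1_0_1 : gens 1 0 (1 : Fin 12) = 1 := rfl
lemma gv1_0_2 : gens 1 0 (2 : Fin 12) = 1 := rfl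
lemma gv1_0_3 : gens 1 0 (3 : Fin 12) = 0 := rfl
lemma gv1_0_4 : gens 1 0 (4 : Fin 12) = 1 := rfl
lemma gv1_0_5 : gens 1 0 (5 : Fin 12) = 0 := rfl
lemma gv1_0_6 : gens 1 0 (6 : Fin 12) = 0 := rfl
lemma gv1_0_7 : gens 1 0 (7 : Fin 12) = 1 := rfl
lemma gv1_0_8 : gens 1 0 (8 : Fin 12) = 0 := rfl
lemma gv1_0_9 : gens 1 0 (9 : Fin 12) = 0 := rfl
lemma gv1_0_10 : gens 1 0 (10 : Fin 12) = 0 := rfl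
lemma gv1_0_11 : gens 1 0 (11 : Fin 12) = 0 := rfl
lemma gv1_1_0 : gens 1 1 (0 : Fin 12) = 1 := rfl
lemma gv1_1_1 : gens 1 1 (1 : Fin 12) = 0 := rfl
lemma gv1_1_2 : gens 1 1 (2 : Fin 12) = 0 := rfl
lemma gv1_1_3 : gens 1 1 (3 : Fin 12) = 1 := rfl
lemma gv1_1_4 : gens 1 1 (4 : Fin 12) = 0 := rfl
lemma gv1_1_5 : gens 1 1 (5 : Fin 12) = 1 := rfl
lemma gv1_1_6 : gens 1 1 (6 : Fin 12) = 1 := rfl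
lemma gv1_1_7 : gens 1 1 (7 : Fin 12) = 0 := rfl
lemma gv1_1_8 : gens 1 1 (8 : Fin 12) = 0 := rfl
lemma gv1_1_9 : gens 1 1 (9 : Fin 12) = 0 := rfl
lemma gv1_1_10 : gens 1 1 (10 : Fin 12) = 0 := rfl
lemma gv1_1_11 : gens 1 1 (11 : Fin 12) = 0 := rfl
lemma gv1_2_0 : gens 1 2 (0 : Fin 12) = 1 := rfl
lemma gv1_2_1 : gens 1 2 (1 : Fin 12) = 0 := rfl
lemma gv1_2_2 : gens 1 2 (2 : Fin 12) = 0 := rfl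
lemma gv1_2_3 : gens 1 2 (3 : Fin 12) = 0 := rfl
lemma gv1_2_4 : gens 1 2 (4 : Fin 12) = 1 := rfl
lemma gv1_2_5 : gens 1 2 (5 : Fin 12) = 0 := rfl
lemma gv1_2_6 : gens 1 2 (6 : Fin 12) = 0 := rfl
lemma gv1_2_7 : gens 1 2 (7 : Fin 12) = 0 := rfl
lemma gv1_2_8 : gens 1 2 (8 : Fin 12) = 0 := rfl
lemma gv1_2_9 : gens 1 2 (9 : Fin 12) = 0 := rfl
lemma gv1_2_10 : gens 1 2 (10 : Fin 12) = 1 := rfl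
lemma gv1_2_11 : gens 1 2 (11 : Fin 12) = 1 := rfl
lemma gv1_3_0 : gens 1 3 (0 : Fin 12) = 1 := rfl
lemma gv1_3_1 : gens 1 3 (1 : Fin 12) = 0 := rfl
lemma gv1_3_2 : gens 1 3 (2 : Fin 12) = 0 := rfl
lemma gv1_3_3 : gens 1 3 (3 : Fin 12) = 1 := rfl
lemma gv1_3_4 : gens 1 3 (4 : Fin 12) = 1 := rfl
lemma gv1_3_5 : gens 1 3 (5 : Fin 12) = 0 := rfl
lemma gv1_3_6 : gens 1 3 (6 : Fin 12) = 0 := rfl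
lemma gv1_3_7 : gens 1 3 (7 : Fin 12) = 1 := rfl
lemma gv1_3_8 : gens 1 3 (8 : Fin 12) = 0 := rfl
lemma gv1_3_9 : gens 1 3 (9 : Fin 12) = 0 := rfl
lemma gv1_3_10 : gens 1 3 (10 : Fin 12) = 0 := rfl
lemma gv1_3_11 : gens 1 3 (11 : Fin 12) = 0 := rfl
lemma gv1_4_0 : gens 1 4 (0 : Fin 12) = 0 := rfl
lemma gv1_4_1 : gens 1 4 (1 : Fin 12) = 0 := rfl
lemma gv1_4_2 : gens 1 4 (2 : Fin 12) = 0 := rfl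
lemma gv1_4_3 : gens 1 4 (3 : Fin 12) = 1 := rfl
lemma gv1_4_4 : gens 1 4 (4 : Fin 12) = 0 := rfl
lemma gv1_4_5 : gens 1 4 (5 : Fin 12) = 0 := rfl
lemma gv1_4_6 : gens 1 4 (6 : Fin 12) = 0 := rfl
lemma gv1_4_7 : gens 1 4 (7 : Fin 12) = 1 := rfl
lemma gv1_4_8 : gens 1 4 (8 : Fin 12) = 1 := rfl
lemma gv1_4_9 : gens 1 4 (9 : Fin 12) = 1 := rfl
lemma gv1_4_10 : gens 1 4 (10 : Fin 12) = 0 := rfl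
lemma gv1_4_11 : gens 1 4 (11 : Fin 12) = 0 := rfl
lemma gv1_5_0 : gens 1 5 (0 : Fin 12) = 0 := rfl
lemma gv1_5_1 : gens 1 5 (1 : Fin 12) = 0 := rfl
lemma gv1_5_2 : gens 1 5 (2 : Fin 12) = 1 := rfl
lemma gv1_5_3 : gens 1 5 (3 : Fin 12) = 0 := rfl
lemma gv1_5_4 : gens 1 5 (4 : Fin 12) = 0 := rfl
lemma gv1_5_5 : gens 1 5 (5 : Fin 12) = 0 := rfl
lemma gv1_5_6 : gens 1 5 (6 : Fin 12) = 1 := rfl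
lemma gv1_5_7 : gens 1 5 (7 : Fin 12) = 0 := rfl
lemma gv1_5_8 : gens 1 5 (8 : Fin 12) = 1 := rfl
lemma gv1_5_9 : gens 1 5 (9 : Fin 12) = 0 := rfl
lemma gv1_5_10 : gens 1 5 (10 : Fin 12) = 0 := rfl
lemma gv1_5_11 : gens 1 5 (11 : Fin 12) = 1 := rfl
lemma bv2_0 : base 2 (0 : Fin 12) = 0 := rfl
lemma bv2_1 : base 2 (1 : Fin 12) = 0 := rfl
lemma bv2_2 : base 2 (2 : Fin 12) = 0 := rfl
lemma bv2_3 : base 2 (3 : Fin 12) = 0 := rfl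
lemma bv2_4 : base 2 (4 : Fin 12) = 0 := rfl
lemma bv2_5 : base 2 (5 : Fin 12) = 0 := rfl
lemma bv2_6 : base 2 (6 : Fin 12) = 0 := rfl
lemma bv2_7 : base 2 (7 : Fin 12) = 0 := rfl
lemma bv2_8 : base 2 (8 : Fin 12) = 1 := rfl
lemma bv2_9 : base 2 (9 : Fin 12) = 1 := rfl
lemma bv2_10 : base 2 (10 : Fin 12) = 1 := rfl
lemma bv2_11 : base 2 (11 : Fin 12) = 1 := rfl
lemma gv2_0_0 : gens 2 0 (0 : Fin 12) = 1 := rfl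
lemma gv2_0_1 : gens 2 0 (1 : Fin 12) = 0 := rfl
lemma gv2_0_2 : gens 2 0 (2 : Fin 12) = 0 := rfl
lemma gv2_0_3 : gens 2 0 (3 : Fin 12) = 1 := rfl
lemma gv2_0_4 : gens 2 0 (4 : Fin 12) = 0 := rfl
lemma gv2_0_5 : gens 2 0 (5 : Fin 12) = 1 := rfl
lemma gv2_0_6 : gens 2 0 (6 : Fin 12) = 1 := rfl
lemma gv2_0_7 : gens 2 0 (7 : Fin 12) = 0 := rfl
lemma gv2_0_8 : gens 2 0 (8 : Fin 12) = 0 := rfl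
lemma gv2_0_9 : gens 2 0 (9 : Fin 12) = 0 := rfl
lemma gv2_0_10 : gens 2 0 (10 : Fin 12) = 0 := rfl
lemma gv2_0_11 : gens 2 0 (11 : Fin 12) = 0 := rfl
lemma gv2_1_0 : gens 2 1 (0 : Fin 12) = 1 := rfl
lemma gv2_1_1 : gens 2 1 (1 : Fin 12) = 0 := rfl
lemma gv2_1_2 : gens 2 1 (2 : Fin 12) = 0 := rfl
lemma gv2_1_3 : gens 2 1 (3 : Fin 12) = 0 := rfl
lemma gv2_1_4 : gens 2 1 (4 : Fin 12) = 1 := rfl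
lemma gv2_1_5 : gens 2 1 (5 : Fin 12) = 0 := rfl
lemma gv2_1_6 : gens 2 1 (6 : Fin 12) = 0 := rfl
lemma gv2_1_7 : gens 2 1 (7 : Fin 12) = 0 := rfl
lemma gv2_1_8 : gens 2 1 (8 : Fin 12) = 0 := rfl
lemma gv2_1_9 : gens 2 1 (9 : Fin 12) = 0 := rfl
lemma gv2_1_10 : gens 2 1 (10 : Fin 12) = 1 := rfl
lemma gv2_1_11 : gens 2 1 (11 : Fin 12) = 1 := rfl
lemma gv2_2_0 : gens 2 2 (0 : Fin 12) = 0 := rfl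
lemma gv2_2_1 : gens 2 2 (1 : Fin 12) = 1 := rfl
lemma gv2_2_2 : gens 2 2 (2 : Fin 12) = 0 := rfl
lemma gv2_2_3 : gens 2 2 (3 : Fin 12) = 0 := rfl
lemma gv2_2_4 : gens 2 2 (4 : Fin 12) = 0 := rfl
lemma gv2_2_5 : gens 2 2 (5 : Fin 12) = 1 := rfl
lemma gv2_2_6 : gens 2 2 (6 : Fin 12) = 0 := rfl
lemma gv2_2_7 : gens 2 2 (7 : Fin 12) = 0 := rfl
lemma gv2_2_8 : gens 2 2 (8 : Fin 12) = 0 := rfl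
lemma gv2_2_9 : gens 2 2 (9 : Fin 12) = 1 := rfl
lemma gv2_2_10 : gens 2 2 (10 : Fin 12) = 1 := rfl
lemma gv2_2_11 : gens 2 2 (11 : Fin 12) = 0 := rfl
lemma gv2_3_0 : gens 2 3 (0 : Fin 12) = 0 := rfl
lemma gv2_3_1 : gens 2 3 (1 : Fin 12) = 0 := rfl
lemma gv2_3_2 : gens 2 3 (2 : Fin 12) = 0 := rfl
lemma gv2_3_3 : gens 2 3 (3 : Fin 12) = 1 := rfl
lemma gv2_3_4 : gens 2 3 (4 : Fin 12) = 0 := rfl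
lemma gv2_3_5 : gens 2 3 (5 : Fin 12) = 0 := rfl
lemma gv2_3_6 : gens 2 3 (6 : Fin 12) = 0 := rfl
lemma gv2_3_7 : gens 2 3 (7 : Fin 12) = 1 := rfl
lemma gv2_3_8 : gens 2 3 (8 : Fin 12) = 1 := rfl
lemma gv2_3_9 : gens 2 3 (9 : Fin 12) = 1 := rfl
lemma gv2_3_10 : gens 2 3 (10 : Fin 12) = 0 := rfl
lemma gv2_3_11 : gens 2 3 (11 : Fin 12) = 0 := rfl
lemma gv2_4_0 : gens 2 4 (0 : Fin 12) = 0 := rfl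
lemma gv2_4_1 : gens 2 4 (1 : Fin 12) = 0 := rfl
lemma gv2_4_2 : gens 2 4 (2 : Fin 12) = 1 := rfl
lemma gv2_4_3 : gens 2 4 (3 : Fin 12) = 0 := rfl
lemma gv2_4_4 : gens 2 4 (4 : Fin 12) = 0 := rfl
lemma gv2_4_5 : gens 2 4 (5 : Fin 12) = 0 := rfl
lemma gv2_4_6 : gens 2 4 (6 : Fin 12) = 1 := rfl
lemma gv2_4_7 : gens 2 4 (7 : Fin 12) = 0 := rfl
lemma gv2_4_8 : gens 2 4 (8 : Fin 12) = 1 := rfl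
lemma gv2_4_9 : gens 2 4 (9 : Fin 12) = 0 := rfl
lemma gv2_4_10 : gens 2 4 (10 : Fin 12) = 0 := rfl
lemma gv2_4_11 : gens 2 4 (11 : Fin 12) = 1 := rfl
lemma gv2_5_0 : gens 2 5 (0 : Fin 12) = 0 := rfl
lemma gv2_5_1 : gens 2 5 (1 : Fin 12) = 0 := rfl
lemma gv2_5_2 : gens 2 5 (2 : Fin 12) = 0 := rfl
lemma gv2_5_3 : gens 2 5 (3 : Fin 12) = 0 := rfl
lemma gv2_5_4 : gens 2 5 (4 : Fin 12) = 0 := rfl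
lemma gv2_5_5 : gens 2 5 (5 : Fin 12) = 0 := rfl
lemma gv2_5_6 : gens 2 5 (6 : Fin 12) = 0 := rfl
lemma gv2_5_7 : gens 2 5 (7 : Fin 12) = 0 := rfl
lemma gv2_5_8 : gens 2 5 (8 : Fin 12) = 1 := rfl
lemma gv2_5_9 : gens 2 5 (9 : Fin 12) = 1 := rfl
lemma gv2_5_10 : gens 2 5 (10 : Fin 12) = 1 := rfl
lemma gv2_5_11 : gens 2 5 (11 : Fin 12) = 1 := rfl
lemma bv3_0 : base 3 (0 : Fin 12) = 0 := rfl
lemma bv3_1 : base 3 (1 : Fin 12) = 1 := rfl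
lemma bv3_2 : base 3 (2 : Fin 12) = 1 := rfl
lemma bv3_3 : base 3 (3 : Fin 12) = 0 := rfl
lemma bv3_4 : base 3 (4 : Fin 12) = 1 := rfl
lemma bv3_5 : base 3 (5 : Fin 12) = 0 := rfl
lemma bv3_6 : base 3 (6 : Fin 12) = 0 := rfl
lemma bv3_7 : base 3 (7 : Fin 12) = 1 := rfl
lemma bv3_8 : base 3 (8 : Fin 12) = 1 := rfl
lemma bv3_9 : base 3 (9 : Fin 12) = 1 := rfl
lemma bv3_10 : base 3 (10 : Fin 12) = 1 := rfl
lemma bv3_11 : base 3 (11 : Fin 12) = 1 := rfl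
lemma gv3_0_0 : gens 3 0 (0 : Fin 12) = 0 := rfl
lemma gv3_0_1 : gens 3 0 (1 : Fin 12) = 1 := rfl
lemma gv3_0_2 : gens 3 0 (2 : Fin 12) = 1 := rfl
lemma gv3_0_3 : gens 3 0 (3 : Fin 12) = 0 := rfl
lemma gv3_0_4 : gens 3 0 (4 : Fin 12) = 1 := rfl
lemma gv3_0_5 : gens 3 0 (5 : Fin 12) = 0 := rfl
lemma gv3_0_6 : gens 3 0 (6 : Fin 12) = 0 := rfl
lemma gv3_0_7 : gens 3 0 (7 : Fin 12) = 1 := rfl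
lemma gv3_0_8 : gens 3 0 (8 : Fin 12) = 0 := rfl
lemma gv3_0_9 : gens 3 0 (9 : Fin 12) = 0 := rfl
lemma gv3_0_10 : gens 3 0 (10 : Fin 12) = 0 := rfl
lemma gv3_0_11 : gens 3 0 (11 : Fin 12) = 0 := rfl
lemma gv3_1_0 : gens 3 1 (0 : Fin 12) = 1 := rfl
lemma gv3_1_1 : gens 3 1 (1 : Fin 12) = 0 := rfl
lemma gv3_1_2 : gens 3 1 (2 : Fin 12) = 0 := rfl
lemma gv3_1_3 : gens 3 1 (3 : Fin 12) = 0 := rfl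
lemma gv3_1_4 : gens 3 1 (4 : Fin 12) = 1 := rfl
lemma gv3_1_5 : gens 3 1 (5 : Fin 12) = 0 := rfl
lemma gv3_1_6 : gens 3 1 (6 : Fin 12) = 0 := rfl
lemma gv3_1_7 : gens 3 1 (7 : Fin 12) = 0 := rfl
lemma gv3_1_8 : gens 3 1 (8 : Fin 12) = 0 := rfl
lemma gv3_1_9 : gens 3 1 (9 : Fin 12) = 0 := rfl
lemma gv3_1_10 : gens 3 1 (10 : Fin 12) = 1 := rfl
lemma gv3_1_11 : gens 3 1 (11 : Fin 12) = 1 := rfl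
lemma gv3_2_0 : gens 3 2 (0 : Fin 12) = 0 := rfl
lemma gv3_2_1 : gens 3 2 (1 : Fin 12) = 1 := rfl
lemma gv3_2_2 : gens 3 2 (2 : Fin 12) = 0 := rfl
lemma gv3_2_3 : gens 3 2 (3 : Fin 12) = 0 := rfl
lemma gv3_2_4 : gens 3 2 (4 : Fin 12) = 0 := rfl
lemma gv3_2_5 : gens 3 2 (5 : Fin 12) = 1 := rfl
lemma gv3_2_6 : gens 3 2 (6 : Fin 12) = 0 := rfl
lemma gv3_2_7 : gens 3 2 (7 : Fin 12) = 0 := rfl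
lemma gv3_2_8 : gens 3 2 (8 : Fin 12) = 0 := rfl
lemma gv3_2_9 : gens 3 2 (9 : Fin 12) = 1 := rfl
lemma gv3_2_10 : gens 3 2 (10 : Fin 12) = 1 := rfl
lemma gv3_2_11 : gens 3 2 (11 : Fin 12) = 0 := rfl
lemma gv3_3_0 : gens 3 3 (0 : Fin 12) = 0 := rfl
lemma gv3_3_1 : gens 3 3 (1 : Fin 12) = 0 := rfl
lemma gv3_3_2 : gens 3 3 (2 : Fin 12) = 0 := rfl
lemma gv3_3_3 : gens 3 3 (3 : Fin 12) = 1 := rfl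
lemma gv3_3_4 : gens 3 3 (4 : Fin 12) = 0 := rfl
lemma gv3_3_5 : gens 3 3 (5 : Fin 12) = 0 := rfl
lemma gv3_3_6 : gens 3 3 (6 : Fin 12) = 0 := rfl
lemma gv3_3_7 : gens 3 3 (7 : Fin 12) = 1 := rfl
lemma gv3_3_8 : gens 3 3 (8 : Fin 12) = 1 := rfl
lemma gv3_3_9 : gens 3 3 (9 : Fin 12) = 1 := rfl
lemma gv3_3_10 : gens 3 3 (10 : Fin 12) = 0 := rfl
lemma gv3_3_11 : gens 3 3 (11 : Fin 12) = 0 := rfl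
lemma gv3_4_0 : gens 3 4 (0 : Fin 12) = 0 := rfl
lemma gv3_4_1 : gens 3 4 (1 : Fin 12) = 0 := rfl
lemma gv3_4_2 : gens 3 4 (2 : Fin 12) = 1 := rfl
lemma gv3_4_3 : gens 3 4 (3 : Fin 12) = 0 := rfl
lemma gv3_4_4 : gens 3 4 (4 : Fin 12) = 0 := rfl
lemma gv3_4_5 : gens 3 4 (5 : Fin 12) = 0 := rfl
lemma gv3_4_6 : gens 3 4 (6 : Fin 12) = 1 := rfl
lemma gv3_4_7 : gens 3 4 (7 : Fin 12) = 0 := rfl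
lemma gv3_4_8 : gens 3 4 (8 : Fin 12) = 1 := rfl
lemma gv3_4_9 : gens 3 4 (9 : Fin 12) = 0 := rfl
lemma gv3_4_10 : gens 3 4 (10 : Fin 12) = 0 := rfl
lemma gv3_4_11 : gens 3 4 (11 : Fin 12) = 1 := rfl
lemma gv3_5_0 : gens 3 5 (0 : Fin 12) = 0 := rfl
lemma gv3_5_1 : gens 3 5 (1 : Fin 12) = 0 := rfl
lemma gv3_5_2 : gens 3 5 (2 : Fin 12) = 0 := rfl
lemma gv3_5_3 : gens 3 5 (3 : Fin 12) = 0 := rfl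
lemma gv3_5_4 : gens 3 5 (4 : Fin 12) = 0 := rfl
lemma gv3_5_5 : gens 3 5 (5 : Fin 12) = 0 := rfl
lemma gv3_5_6 : gens 3 5 (6 : Fin 12) = 0 := rfl
lemma gv3_5_7 : gens 3 5 (7 : Fin 12) = 0 := rfl
lemma gv3_5_8 : gens 3 5 (8 : Fin 12) = 1 := rfl
lemma gv3_5_9 : gens 3 5 (9 : Fin 12) = 1 := rfl
lemma gv3_5_10 : gens 3 5 (10 : Fin 12) = 1 := rfl
lemma gv3_5_11 : gens 3 5 (11 : Fin 12) = 1 := rfl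
lemma bv4_0 : base 4 (0 : Fin 12) = 0 := rfl
lemma bv4_1 : base 4 (1 : Fin 12) = 1 := rfl
lemma bv4_2 : base 4 (2 : Fin 12) = 1 := rfl
lemma bv4_3 : base 4 (3 : Fin 12) = 1 := rfl
lemma bv4_4 : base 4 (4 : Fin 12) = 0 := rfl
lemma bv4_5 : base 4 (5 : Fin 12) = 1 := rfl
lemma bv4_6 : base 4 (6 : Fin 12) = 1 := rfl
lemma bv4_7 : base 4 (7 : Fin 12) = 1 := rfl
lemma bv4_8 : base 4 (8 : Fin 12) = 1 := rfl
lemma bv4_9 : base 4 (9 : Fin 12) = 1 := rfl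
lemma bv4_10 : base 4 (10 : Fin 12) = 0 := rfl
lemma bv4_11 : base 4 (11 : Fin 12) = 0 := rfl
lemma gv4_0_0 : gens 4 0 (0 : Fin 12) = 0 := rfl
lemma gv4_0_1 : gens 4 0 (1 : Fin 12) = 1 := rfl
lemma gv4_0_2 : gens 4 0 (2 : Fin 12) = 1 := rfl
lemma gv4_0_3 : gens 4 0 (3 : Fin 12) = 0 := rfl
lemma gv4_0_4 : gens 4 0 (4 : Fin 12) = 1 := rfl
lemma gv4_0_5 : gens 4 0 (5 : Fin 12) = 0 := rfl
lemma gv4_0_6 : gens 4 0 (6 : Fin 12) = 0 := rfl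
lemma gv4_0_7 : gens 4 0 (7 : Fin 12) = 1 := rfl
lemma gv4_0_8 : gens 4 0 (8 : Fin 12) = 0 := rfl
lemma gv4_0_9 : gens 4 0 (9 : Fin 12) = 0 := rfl
lemma gv4_0_10 : gens 4 0 (10 : Fin 12) = 0 := rfl
lemma gv4_0_11 : gens 4 0 (11 : Fin 12) = 0 := rfl
lemma gv4_1_0 : gens 4 1 (0 : Fin 12) = 1 := rfl
lemma gv4_1_1 : gens 4 1 (1 : Fin 12) = 0 := rfl
lemma gv4_1_2 : gens 4 1 (2 : Fin 12) = 0 := rfl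
lemma gv4_1_3 : gens 4 1 (3 : Fin 12) = 1 := rfl
lemma gv4_1_4 : gens 4 1 (4 : Fin 12) = 0 := rfl
lemma gv4_1_5 : gens 4 1 (5 : Fin 12) = 1 := rfl
lemma gv4_1_6 : gens 4 1 (6 : Fin 12) = 1 := rfl
lemma gv4_1_7 : gens 4 1 (7 : Fin 12) = 0 := rfl
lemma gv4_1_8 : gens 4 1 (8 : Fin 12) = 0 := rfl
lemma gv4_1_9 : gens 4 1 (9 : Fin 12) = 0 := rfl
lemma gv4_1_10 : gens 4 1 (10 : Fin 12) = 0 := rfl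
lemma gv4_1_11 : gens 4 1 (11 : Fin 12) = 0 := rfl
lemma gv4_2_0 : gens 4 2 (0 : Fin 12) = 0 := rfl
lemma gv4_2_1 : gens 4 2 (1 : Fin 12) = 1 := rfl
lemma gv4_2_2 : gens 4 2 (2 : Fin 12) = 0 := rfl
lemma gv4_2_3 : gens 4 2 (3 : Fin 12) = 0 := rfl
lemma gv4_2_4 : gens 4 2 (4 : Fin 12) = 0 := rfl
lemma gv4_2_5 : gens 4 2 (5 : Fin 12) = 1 := rfl
lemma gv4_2_6 : gens 4 2 (6 : Fin 12) = 0 := rfl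
lemma gv4_2_7 : gens 4 2 (7 : Fin 12) = 0 := rfl
lemma gv4_2_8 : gens 4 2 (8 : Fin 12) = 0 := rfl
lemma gv4_2_9 : gens 4 2 (9 : Fin 12) = 1 := rfl
lemma gv4_2_10 : gens 4 2 (10 : Fin 12) = 1 := rfl
lemma gv4_2_11 : gens 4 2 (11 : Fin 12) = 0 := rfl
lemma gv4_3_0 : gens 4 3 (0 : Fin 12) = 0 := rfl
lemma gv4_3_1 : gens 4 3 (1 : Fin 12) = 0 := rfl
lemma gv4_3_2 : gens 4 3 (2 : Fin 12) = 0 := rfl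
lemma gv4_3_3 : gens 4 3 (3 : Fin 12) = 1 := rfl
lemma gv4_3_4 : gens 4 3 (4 : Fin 12) = 0 := rfl
lemma gv4_3_5 : gens 4 3 (5 : Fin 12) = 0 := rfl
lemma gv4_3_6 : gens 4 3 (6 : Fin 12) = 0 := rfl
lemma gv4_3_7 : gens 4 3 (7 : Fin 12) = 1 := rfl
lemma gv4_3_8 : gens 4 3 (8 : Fin 12) = 1 := rfl
lemma gv4_3_9 : gens 4 3 (9 : Fin 12) = 1 := rfl
lemma gv4_3_10 : gens 4 3 (10 : Fin 12) = 0 := rfl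
lemma gv4_3_11 : gens 4 3 (11 : Fin 12) = 0 := rfl
lemma gv4_4_0 : gens 4 4 (0 : Fin 12) = 0 := rfl
lemma gv4_4_1 : gens 4 4 (1 : Fin 12) = 0 := rfl
lemma gv4_4_2 : gens 4 4 (2 : Fin 12) = 1 := rfl
lemma gv4_4_3 : gens 4 4 (3 : Fin 12) = 0 := rfl
lemma gv4_4_4 : gens 4 4 (4 : Fin 12) = 0 := rfl
lemma gv4_4_5 : gens 4 4 (5 : Fin 12) = 0 := rfl
lemma gv4_4_6 : gens 4 4 (6 : Fin 12) = 1 := rfl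
lemma gv4_4_7 : gens 4 4 (7 : Fin 12) = 0 := rfl
lemma gv4_4_8 : gens 4 4 (8 : Fin 12) = 1 := rfl
lemma gv4_4_9 : gens 4 4 (9 : Fin 12) = 0 := rfl
lemma gv4_4_10 : gens 4 4 (10 : Fin 12) = 0 := rfl
lemma gv4_4_11 : gens 4 4 (11 : Fin 12) = 1 := rfl
lemma gv4_5_0 : gens 4 5 (0 : Fin 12) = 0 := rfl
lemma gv4_5_1 : gens 4 5 (1 : Fin 12) = 1 := rfl
lemma gv4_5_2 : gens 4 5 (2 : Fin 12) = 1 := rfl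
lemma gv4_5_3 : gens 4 5 (3 : Fin 12) = 0 := rfl
lemma gv4_5_4 : gens 4 5 (4 : Fin 12) = 0 := rfl
lemma gv4_5_5 : gens 4 5 (5 : Fin 12) = 1 := rfl
lemma gv4_5_6 : gens 4 5 (6 : Fin 12) = 1 := rfl
lemma gv4_5_7 : gens 4 5 (7 : Fin 12) = 0 := rfl
lemma gv4_5_8 : gens 4 5 (8 : Fin 12) = 0 := rfl
lemma gv4_5_9 : gens 4 5 (9 : Fin 12) = 0 := rfl
lemma gv4_5_10 : gens 4 5 (10 : Fin 12) = 0 := rfl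
lemma gv4_5_11 : gens 4 5 (11 : Fin 12) = 0 := rfl
lemma bv5_0 : base 5 (0 : Fin 12) = 0 := rfl
lemma bv5_1 : base 5 (1 : Fin 12) = 1 := rfl
lemma bv5_2 : base 5 (2 : Fin 12) = 1 := rfl
lemma bv5_3 : base 5 (3 : Fin 12) = 0 := rfl
lemma bv5_4 : base 5 (4 : Fin 12) = 0 := rfl
lemma bv5_5 : base 5 (5 : Fin 12) = 1 := rfl
lemma bv5_6 : base 5 (6 : Fin 12) = 1 := rfl
lemma bv5_7 : base 5 (7 : Fin 12) = 0 := rfl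
lemma bv5_8 : base 5 (8 : Fin 12) = 0 := rfl
lemma bv5_9 : base 5 (9 : Fin 12) = 0 := rfl
lemma bv5_10 : base 5 (10 : Fin 12) = 0 := rfl
lemma bv5_11 : base 5 (11 : Fin 12) = 0 := rfl
lemma gv5_0_0 : gens 5 0 (0 : Fin 12) = 0 := rfl
lemma gv5_0_1 : gens 5 0 (1 : Fin 12) = 1 := rfl
lemma gv5_0_2 : gens 5 0 (2 : Fin 12) = 1 := rfl
lemma gv5_0_3 : gens 5 0 (3 : Fin 12) = 0 := rfl
lemma gv5_0_4 : gens 5 0 (4 : Fin 12) = 1 := rfl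
lemma gv5_0_5 : gens 5 0 (5 : Fin 12) = 0 := rfl
lemma gv5_0_6 : gens 5 0 (6 : Fin 12) = 0 := rfl
lemma gv5_0_7 : gens 5 0 (7 : Fin 12) = 1 := rfl
lemma gv5_0_8 : gens 5 0 (8 : Fin 12) = 0 := rfl
lemma gv5_0_9 : gens 5 0 (9 : Fin 12) = 0 := rfl
lemma gv5_0_10 : gens 5 0 (10 : Fin 12) = 0 := rfl
lemma gv5_0_11 : gens 5 0 (11 : Fin 12) = 0 := rfl
lemma gv5_1_0 : gens 5 1 (0 : Fin 12) = 1 := rfl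
lemma gv5_1_1 : gens 5 1 (1 : Fin 12) = 0 := rfl
lemma gv5_1_2 : gens 5 1 (2 : Fin 12) = 0 := rfl
lemma gv5_1_3 : gens 5 1 (3 : Fin 12) = 1 := rfl
lemma gv5_1_4 : gens 5 1 (4 : Fin 12) = 0 := rfl
lemma gv5_1_5 : gens 5 1 (5 : Fin 12) = 1 := rfl
lemma gv5_1_6 : gens 5 1 (6 : Fin 12) = 1 := rfl
lemma gv5_1_7 : gens 5 1 (7 : Fin 12) = 0 := rfl
lemma gv5_1_8 : gens 5 1 (8 : Fin 12) = 0 := rfl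
lemma gv5_1_9 : gens 5 1 (9 : Fin 12) = 0 := rfl
lemma gv5_1_10 : gens 5 1 (10 : Fin 12) = 0 := rfl
lemma gv5_1_11 : gens 5 1 (11 : Fin 12) = 0 := rfl
lemma gv5_2_0 : gens 5 2 (0 : Fin 12) = 1 := rfl
lemma gv5_2_1 : gens 5 2 (1 : Fin 12) = 0 := rfl
lemma gv5_2_2 : gens 5 2 (2 : Fin 12) = 0 := rfl
lemma gv5_2_3 : gens 5 2 (3 : Fin 12) = 0 := rfl
lemma gv5_2_4 : gens 5 2 (4 : Fin 12) = 1 := rfl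
lemma gv5_2_5 : gens 5 2 (5 : Fin 12) = 0 := rfl
lemma gv5_2_6 : gens 5 2 (6 : Fin 12) = 0 := rfl
lemma gv5_2_7 : gens 5 2 (7 : Fin 12) = 0 := rfl
lemma gv5_2_8 : gens 5 2 (8 : Fin 12) = 0 := rfl
lemma gv5_2_9 : gens 5 2 (9 : Fin 12) = 0 := rfl
lemma gv5_2_10 : gens 5 2 (10 : Fin 12) = 1 := rfl
lemma gv5_2_11 : gens 5 2 (11 : Fin 12) = 1 := rfl
lemma gv5_3_0 : gens 5 3 (0 : Fin 12) = 0 := rfl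
lemma gv5_3_1 : gens 5 3 (1 : Fin 12) = 1 := rfl
lemma gv5_3_2 : gens 5 3 (2 : Fin 12) = 0 := rfl
lemma gv5_3_3 : gens 5 3 (3 : Fin 12) = 0 := rfl
lemma gv5_3_4 : gens 5 3 (4 : Fin 12) = 0 := rfl
lemma gv5_3_5 : gens 5 3 (5 : Fin 12) = 1 := rfl
lemma gv5_3_6 : gens 5 3 (6 : Fin 12) = 0 := rfl
lemma gv5_3_7 : gens 5 3 (7 : Fin 12) = 0 := rfl
lemma gv5_3_8 : gens 5 3 (8 : Fin 12) = 0 := rfl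
lemma gv5_3_9 : gens 5 3 (9 : Fin 12) = 1 := rfl
lemma gv5_3_10 : gens 5 3 (10 : Fin 12) = 1 := rfl
lemma gv5_3_11 : gens 5 3 (11 : Fin 12) = 0 := rfl
lemma gv5_4_0 : gens 5 4 (0 : Fin 12) = 0 := rfl
lemma gv5_4_1 : gens 5 4 (1 : Fin 12) = 0 := rfl
lemma gv5_4_2 : gens 5 4 (2 : Fin 12) = 1 := rfl
lemma gv5_4_3 : gens 5 4 (3 : Fin 12) = 0 := rfl
lemma gv5_4_4 : gens 5 4 (4 : Fin 12) = 0 := rfl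
lemma gv5_4_5 : gens 5 4 (5 : Fin 12) = 0 := rfl
lemma gv5_4_6 : gens 5 4 (6 : Fin 12) = 1 := rfl
lemma gv5_4_7 : gens 5 4 (7 : Fin 12) = 0 := rfl
lemma gv5_4_8 : gens 5 4 (8 : Fin 12) = 1 := rfl
lemma gv5_4_9 : gens 5 4 (9 : Fin 12) = 0 := rfl
lemma gv5_4_10 : gens 5 4 (10 : Fin 12) = 0 := rfl
lemma gv5_4_11 : gens 5 4 (11 : Fin 12) = 1 := rfl
lemma gv5_5_0 : gens 5 5 (0 : Fin 12) = 0 := rfl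
lemma gv5_5_1 : gens 5 5 (1 : Fin 12) = 1 := rfl
lemma gv5_5_2 : gens 5 5 (2 : Fin 12) = 1 := rfl
lemma gv5_5_3 : gens 5 5 (3 : Fin 12) = 0 := rfl
lemma gv5_5_4 : gens 5 5 (4 : Fin 12) = 0 := rfl
lemma gv5_5_5 : gens 5 5 (5 : Fin 12) = 1 := rfl
lemma gv5_5_6 : gens 5 5 (6 : Fin 12) = 1 := rfl
lemma gv5_5_7 : gens 5 5 (7 : Fin 12) = 0 := rfl
lemma gv5_5_8 : gens 5 5 (8 : Fin 12) = 0 := rfl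
lemma gv5_5_9 : gens 5 5 (9 : Fin 12) = 0 := rfl
lemma gv5_5_10 : gens 5 5 (10 : Fin 12) = 0 := rfl
lemma gv5_5_11 : gens 5 5 (11 : Fin 12) = 0 := rfl
lemma bv6_0 : base 6 (0 : Fin 12) = 0 := rfl
lemma bv6_1 : base 6 (1 : Fin 12) = 1 := rfl
lemma bv6_2 : base 6 (2 : Fin 12) = 1 := rfl
lemma bv6_3 : base 6 (3 : Fin 12) = 0 := rfl
lemma bv6_4 : base 6 (4 : Fin 12) = 0 := rfl
lemma bv6_5 : base 6 (5 : Fin 12) = 1 := rfl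
lemma bv6_6 : base 6 (6 : Fin 12) = 1 := rfl
lemma bv6_7 : base 6 (7 : Fin 12) = 0 := rfl
lemma bv6_8 : base 6 (8 : Fin 12) = 1 := rfl
lemma bv6_9 : base 6 (9 : Fin 12) = 1 := rfl
lemma bv6_10 : base 6 (10 : Fin 12) = 1 := rfl
lemma bv6_11 : base 6 (11 : Fin 12) = 1 := rfl
lemma gv6_0_0 : gens 6 0 (0 : Fin 12) = 0 := rfl
lemma gv6_0_1 : gens 6 0 (1 : Fin 12) = 1 := rfl
lemma gv6_0_2 : gens 6 0 (2 : Fin 12) = 1 := rfl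
lemma gv6_0_3 : gens 6 0 (3 : Fin 12) = 0 := rfl
lemma gv6_0_4 : gens 6 0 (4 : Fin 12) = 1 := rfl
lemma gv6_0_5 : gens 6 0 (5 : Fin 12) = 0 := rfl
lemma gv6_0_6 : gens 6 0 (6 : Fin 12) = 0 := rfl
lemma gv6_0_7 : gens 6 0 (7 : Fin 12) = 1 := rfl
lemma gv6_0_8 : gens 6 0 (8 : Fin 12) = 0 := rfl
lemma gv6_0_9 : gens 6 0 (9 : Fin 12) = 0 := rfl
lemma gv6_0_10 : gens 6 0 (10 : Fin 12) = 0 := rfl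
lemma gv6_0_11 : gens 6 0 (11 : Fin 12) = 0 := rfl
lemma gv6_1_0 : gens 6 1 (0 : Fin 12) = 1 := rfl
lemma gv6_1_1 : gens 6 1 (1 : Fin 12) = 0 := rfl
lemma gv6_1_2 : gens 6 1 (2 : Fin 12) = 0 := rfl
lemma gv6_1_3 : gens 6 1 (3 : Fin 12) = 1 := rfl
lemma gv6_1_4 : gens 6 1 (4 : Fin 12) = 0 := rfl
lemma gv6_1_5 : gens 6 1 (5 : Fin 12) = 1 := rfl
lemma gv6_1_6 : gens 6 1 (6 : Fin 12) = 1 := rfl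
lemma gv6_1_7 : gens 6 1 (7 : Fin 12) = 0 := rfl
lemma gv6_1_8 : gens 6 1 (8 : Fin 12) = 0 := rfl
lemma gv6_1_9 : gens 6 1 (9 : Fin 12) = 0 := rfl
lemma gv6_1_10 : gens 6 1 (10 : Fin 12) = 0 := rfl
lemma gv6_1_11 : gens 6 1 (11 : Fin 12) = 0 := rfl
lemma gv6_2_0 : gens 6 2 (0 : Fin 12) = 1 := rfl
lemma gv6_2_1 : gens 6 2 (1 : Fin 12) = 0 := rfl
lemma gv6_2_2 : gens 6 2 (2 : Fin 12) = 0 := rfl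
lemma gv6_2_3 : gens 6 2 (3 : Fin 12) = 0 := rfl
lemma gv6_2_4 : gens 6 2 (4 : Fin 12) = 1 := rfl
lemma gv6_2_5 : gens 6 2 (5 : Fin 12) = 0 := rfl
lemma gv6_2_6 : gens 6 2 (6 : Fin 12) = 0 := rfl
lemma gv6_2_7 : gens 6 2 (7 : Fin 12) = 0 := rfl
lemma gv6_2_8 : gens 6 2 (8 : Fin 12) = 0 := rfl
lemma gv6_2_9 : gens 6 2 (9 : Fin 12) = 0 := rfl
lemma gv6_2_10 : gens 6 2 (10 : Fin 12) = 1 := rfl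
lemma gv6_2_11 : gens 6 2 (11 : Fin 12) = 1 := rfl
lemma gv6_3_0 : gens 6 3 (0 : Fin 12) = 0 := rfl
lemma gv6_3_1 : gens 6 3 (1 : Fin 12) = 1 := rfl
lemma gv6_3_2 : gens 6 3 (2 : Fin 12) = 0 := rfl
lemma gv6_3_3 : gens 6 3 (3 : Fin 12) = 0 := rfl
lemma gv6_3_4 : gens 6 3 (4 : Fin 12) = 0 := rfl
lemma gv6_3_5 : gens 6 3 (5 : Fin 12) = 1 := rfl
lemma gv6_3_6 : gens 6 3 (6 : Fin 12) = 0 := rfl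
lemma gv6_3_7 : gens 6 3 (7 : Fin 12) = 0 := rfl
lemma gv6_3_8 : gens 6 3 (8 : Fin 12) = 0 := rfl
lemma gv6_3_9 : gens 6 3 (9 : Fin 12) = 1 := rfl
lemma gv6_3_10 : gens 6 3 (10 : Fin 12) = 1 := rfl
lemma gv6_3_11 : gens 6 3 (11 : Fin 12) = 0 := rfl
lemma gv6_4_0 : gens 6 4 (0 : Fin 12) = 0 := rfl
lemma gv6_4_1 : gens 6 4 (1 : Fin 12) = 0 := rfl
lemma gv6_4_2 : gens 6 4 (2 : Fin 12) = 0 := rfl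
lemma gv6_4_3 : gens 6 4 (3 : Fin 12) = 1 := rfl
lemma gv6_4_4 : gens 6 4 (4 : Fin 12) = 0 := rfl
lemma gv6_4_5 : gens 6 4 (5 : Fin 12) = 0 := rfl
lemma gv6_4_6 : gens 6 4 (6 : Fin 12) = 0 := rfl
lemma gv6_4_7 : gens 6 4 (7 : Fin 12) = 1 := rfl
lemma gv6_4_8 : gens 6 4 (8 : Fin 12) = 1 := rfl
lemma gv6_4_9 : gens 6 4 (9 : Fin 12) = 1 := rfl
lemma gv6_4_10 : gens 6 4 (10 : Fin 12) = 0 := rfl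
lemma gv6_4_11 : gens 6 4 (11 : Fin 12) = 0 := rfl
lemma gv6_5_0 : gens 6 5 (0 : Fin 12) = 0 := rfl
lemma gv6_5_1 : gens 6 5 (1 : Fin 12) = 0 := rfl
lemma gv6_5_2 : gens 6 5 (2 : Fin 12) = 1 := rfl
lemma gv6_5_3 : gens 6 5 (3 : Fin 12) = 0 := rfl
lemma gv6_5_4 : gens 6 5 (4 : Fin 12) = 0 := rfl
lemma gv6_5_5 : gens 6 5 (5 : Fin 12) = 0 := rfl
lemma gv6_5_6 : gens 6 5 (6 : Fin 12) = 1 := rfl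
lemma gv6_5_7 : gens 6 5 (7 : Fin 12) = 0 := rfl
lemma gv6_5_8 : gens 6 5 (8 : Fin 12) = 1 := rfl
lemma gv6_5_9 : gens 6 5 (9 : Fin 12) = 0 := rfl
lemma gv6_5_10 : gens 6 5 (10 : Fin 12) = 0 := rfl
lemma gv6_5_11 : gens 6 5 (11 : Fin 12) = 1 := rfl
lemma bv7_0 : base 7 (0 : Fin 12) = 1 := rfl
lemma bv7_1 : base 7 (1 : Fin 12) = 1 := rfl
lemma bv7_2 : base 7 (2 : Fin 12) = 1 := rfl
lemma bv7_3 : base 7 (3 : Fin 12) = 1 := rfl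
lemma bv7_4 : base 7 (4 : Fin 12) = 1 := rfl
lemma bv7_5 : base 7 (5 : Fin 12) = 1 := rfl
lemma bv7_6 : base 7 (6 : Fin 12) = 1 := rfl
lemma bv7_7 : base 7 (7 : Fin 12) = 1 := rfl
lemma bv7_8 : base 7 (8 : Fin 12) = 1 := rfl
lemma bv7_9 : base 7 (9 : Fin 12) = 1 := rfl
lemma bv7_10 : base 7 (10 : Fin 12) = 1 := rfl
lemma bv7_11 : base 7 (11 : Fin 12) = 1 := rfl
lemma gv7_0_0 : gens 7 0 (0 : Fin 12) = 0 := rfl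
lemma gv7_0_1 : gens 7 0 (1 : Fin 12) = 1 := rfl
lemma gv7_0_2 : gens 7 0 (2 : Fin 12) = 1 := rfl
lemma gv7_0_3 : gens 7 0 (3 : Fin 12) = 0 := rfl
lemma gv7_0_4 : gens 7 0 (4 : Fin 12) = 1 := rfl
lemma gv7_0_5 : gens 7 0 (5 : Fin 12) = 0 := rfl
lemma gv7_0_6 : gens 7 0 (6 : Fin 12) = 0 := rfl
lemma gv7_0_7 : gens 7 0 (7 : Fin 12) = 1 := rfl
lemma gv7_0_8 : gens 7 0 (8 : Fin 12) = 0 := rfl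
lemma gv7_0_9 : gens 7 0 (9 : Fin 12) = 0 := rfl
lemma gv7_0_10 : gens 7 0 (10 : Fin 12) = 0 := rfl
lemma gv7_0_11 : gens 7 0 (11 : Fin 12) = 0 := rfl
lemma gv7_1_0 : gens 7 1 (0 : Fin 12) = 1 := rfl
lemma gv7_1_1 : gens 7 1 (1 : Fin 12) = 0 := rfl
lemma gv7_1_2 : gens 7 1 (2 : Fin 12) = 0 := rfl
lemma gv7_1_3 : gens 7 1 (3 : Fin 12) = 1 := rfl
lemma gv7_1_4 : gens 7 1 (4 : Fin 12) = 0 := rfl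
lemma gv7_1_5 : gens 7 1 (5 : Fin 12) = 1 := rfl
lemma gv7_1_6 : gens 7 1 (6 : Fin 12) = 1 := rfl
lemma gv7_1_7 : gens 7 1 (7 : Fin 12) = 0 := rfl
lemma gv7_1_8 : gens 7 1 (8 : Fin 12) = 0 := rfl
lemma gv7_1_9 : gens 7 1 (9 : Fin 12) = 0 := rfl
lemma gv7_1_10 : gens 7 1 (10 : Fin 12) = 0 := rfl
lemma gv7_1_11 : gens 7 1 (11 : Fin 12) = 0 := rfl
lemma gv7_2_0 : gens 7 2 (0 : Fin 12) = 1 := rfl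
lemma gv7_2_1 : gens 7 2 (1 : Fin 12) = 0 := rfl
lemma gv7_2_2 : gens 7 2 (2 : Fin 12) = 0 := rfl
lemma gv7_2_3 : gens 7 2 (3 : Fin 12) = 0 := rfl
lemma gv7_2_4 : gens 7 2 (4 : Fin 12) = 1 := rfl
lemma gv7_2_5 : gens 7 2 (5 : Fin 12) = 0 := rfl
lemma gv7_2_6 : gens 7 2 (6 : Fin 12) = 0 := rfl
lemma gv7_2_7 : gens 7 2 (7 : Fin 12) = 0 := rfl
lemma gv7_2_8 : gens 7 2 (8 : Fin 12) = 0 := rfl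
lemma gv7_2_9 : gens 7 2 (9 : Fin 12) = 0 := rfl
lemma gv7_2_10 : gens 7 2 (10 : Fin 12) = 1 := rfl
lemma gv7_2_11 : gens 7 2 (11 : Fin 12) = 1 := rfl
lemma gv7_3_0 : gens 7 3 (0 : Fin 12) = 0 := rfl
lemma gv7_3_1 : gens 7 3 (1 : Fin 12) = 1 := rfl
lemma gv7_3_2 : gens 7 3 (2 : Fin 12) = 0 := rfl
lemma gv7_3_3 : gens 7 3 (3 : Fin 12) = 0 := rfl
lemma gv7_3_4 : gens 7 3 (4 : Fin 12) = 0 := rfl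
lemma gv7_3_5 : gens 7 3 (5 : Fin 12) = 1 := rfl
lemma gv7_3_6 : gens 7 3 (6 : Fin 12) = 0 := rfl
lemma gv7_3_7 : gens 7 3 (7 : Fin 12) = 0 := rfl
lemma gv7_3_8 : gens 7 3 (8 : Fin 12) = 0 := rfl
lemma gv7_3_9 : gens 7 3 (9 : Fin 12) = 1 := rfl
lemma gv7_3_10 : gens 7 3 (10 : Fin 12) = 1 := rfl
lemma gv7_3_11 : gens 7 3 (11 : Fin 12) = 0 := rfl
lemma gv7_4_0 : gens 7 4 (0 : Fin 12) = 0 := rfl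
lemma gv7_4_1 : gens 7 4 (1 : Fin 12) = 0 := rfl
lemma gv7_4_2 : gens 7 4 (2 : Fin 12) = 0 := rfl
lemma gv7_4_3 : gens 7 4 (3 : Fin 12) = 1 := rfl
lemma gv7_4_4 : gens 7 4 (4 : Fin 12) = 0 := rfl
lemma gv7_4_5 : gens 7 4 (5 : Fin 12) = 0 := rfl
lemma gv7_4_6 : gens 7 4 (6 : Fin 12) = 0 := rfl
lemma gv7_4_7 : gens 7 4 (7 : Fin 12) = 1 := rfl
lemma gv7_4_8 : gens 7 4 (8 : Fin 12) = 1 := rfl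
lemma gv7_4_9 : gens 7 4 (9 : Fin 12) = 1 := rfl
lemma gv7_4_10 : gens 7 4 (10 : Fin 12) = 0 := rfl
lemma gv7_4_11 : gens 7 4 (11 : Fin 12) = 0 := rfl
lemma gv7_5_0 : gens 7 5 (0 : Fin 12) = 0 := rfl
lemma gv7_5_1 : gens 7 5 (1 : Fin 12) = 0 := rfl
lemma gv7_5_2 : gens 7 5 (2 : Fin 12) = 1 := rfl
lemma gv7_5_3 : gens 7 5 (3 : Fin 12) = 0 := rfl
lemma gv7_5_4 : gens 7 5 (4 : Fin 12) = 0 := rfl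
lemma gv7_5_5 : gens 7 5 (5 : Fin 12) = 0 := rfl
lemma gv7_5_6 : gens 7 5 (6 : Fin 12) = 1 := rfl
lemma gv7_5_7 : gens 7 5 (7 : Fin 12) = 0 := rfl
lemma gv7_5_8 : gens 7 5 (8 : Fin 12) = 1 := rfl
lemma gv7_5_9 : gens 7 5 (9 : Fin 12) = 0 := rfl
lemma gv7_5_10 : gens 7 5 (10 : Fin 12) = 0 := rfl
lemma gv7_5_11 : gens 7 5 (11 : Fin 12) = 1 := rfl

lemma kv0 (a b c d e f : ℕ) : ![a,b,c,d,e,f] (0:Fin 6) = a := rfl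
lemma kv1 (a b c d e f : ℕ) : ![a,b,c,d,e,f] (1:Fin 6) = b := rfl
lemma kv2 (a b c d e f : ℕ) : ![a,b,c,d,e,f] (2:Fin 6) = c := rfl
lemma kv3 (a b c d e f : ℕ) : ![a,b,c,d,e,f] (3:Fin 6) = d := rfl
lemma kv4 (a b c d e f : ℕ) : ![a,b,c,d,e,f] (4:Fin 6) = e := rfl
lemma kv5 (a b c d e f : ℕ) : ![a,b,c,d,e,f] (5:Fin 6) = f := rfl

lemma funext12 {f g : Fin 12 → ℕ} (h0 : f 0 = g 0) (h1 : f 1 = g 1) (h2 : f 2 = g 2)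
    (h3 : f 3 = g 3) (h4 : f 4 = g 4) (h5 : f 5 = g 5) (h6 : f 6 = g 6) (h7 : f 7 = g 7)
    (h8 : f 8 = g 8) (h9 : f 9 = g 9) (h10 : f 10 = g 10) (h11 : f 11 = g 11) : f = g := by
  funext j
  fin_cases j
  exacts [h0, h1, h2, h3, h4, h5, h6, h7, h8, h9, h10, h11]

lemma funext6 {f g : Fin 6 → ℕ} (h0 : f 0 = g 0) (h1 : f 1 = g 1) (h2 : f 2 = g 2)
    (h3 : f 3 = g 3) (h4 : f 4 = g 4) (h5 : f 5 = g 5) : f = g := by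
  funext j
  fin_cases j
  exacts [h0, h1, h2, h3, h4, h5]

lemma fin8_cases (t : Fin 8) : t = 0 ∨ t = 1 ∨ t = 2 ∨ t = 3 ∨ t = 4 ∨ t = 5 ∨ t = 6 ∨ t = 7 := by
  fin_cases t <;> decide

lemma rep_apply (t : Fin 8) (k : Fin 6 → ℕ) (j : Fin 12) :
    rep t k j = base t j + (k 0 * gens t 0 j + k 1 * gens t 1 j + k 2 * gens t 2 j
      + k 3 * gens t 3 j + k 4 * gens t 4 j + k 5 * gens t 5 j) := by
  simp [rep, Fin.sum_univ_six, add_assoc]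


set_option maxHeartbeats 4000000 in
lemma rep_inj {t t' : Fin 8} {k k' : Fin 6 → ℕ} (h : rep t k = rep t' k') :
    t = t' ∧ k = k' := by
  have h0 := congrFun h 0
  have h1 := congrFun h 1
  have h2 := congrFun h 2
  have h3 := congrFun h 3
  have h4 := congrFun h 4
  have h5 := congrFun h 5
  have h6 := congrFun h 6
  have h7 := congrFun h 7
  have h8 := congrFun h 8
  have h9 := congrFun h 9
  have h10 := congrFun h 10
  have h11 := congrFun h 11
  simp only [rep_apply] at h0 h1 h2 h3 h4 h5 h6 h7 h8 h9 h10 h11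
  rcases fin8_cases t with rfl|rfl|rfl|rfl|rfl|rfl|rfl|rfl <;>
  rcases fin8_cases t' with rfl|rfl|rfl|rfl|rfl|rfl|rfl|rfl <;>
    simp only [bv0_0, bv0_1, bv0_2, bv0_3, bv0_4, bv0_5, bv0_6, bv0_7, bv0_8, bv0_9, bv0_10, bv0_11, gv0_0_0, gv0_0_1, gv0_0_2, gv0_0_3, gv0_0_4, gv0_0_5, gv0_0_6, gv0_0_7, gv0_0_8, gv0_0_9, gv0_0_10, gv0_0_11, gv0_1_0, gv0_1_1, gv0_1_2, gv0_1_3, gv0_1_4, gv0_1_5, gv0_1_6, gv0_1_7, gv0_1_8, gv0_1_9, gv0_1_10, gv0_1_11, gv0_2_0, gv0_2_1, gv0_2_2, gv0_2_3, gv0_2_4, gv0_2_5, gv0_2_6, gv0_2_7, gv0_2_8, gv0_2_9, gv0_2_10, gv0_2_11, gv0_3_0, gv0_3_1, gv0_3_2, gv0_3_3, gv0_3_4, gv0_3_5, gv0_3_6, gv0_3_7, gv0_3_8, gv0_3_9, gv0_3_10, gv0_3_11, gv0_4_0, gv0_4_1, gv0_4_2, gv0_4_3, gv0_4_4, gv0_4_5,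 gv0_4_6, gv0_4_7, gv0_4_8, gv0_4_9, gv0_4_10, gv0_4_11, gv0_5_0, gv0_5_1, gv0_5_2, gv0_5_3, gv0_5_4, gv0_5_5, gv0_5_6, gv0_5_7, gv0_5_8, gv0_5_9, gv0_5_10, gv0_5_11, bv1_0, bv1_1, bv1_2, bv1_3, bv1_4, bv1_5, bv1_6, bv1_7, bv1_8, bv1_9, bv1_10, bv1_11, gv1_0_0, gv1_0_1, gv1_0_2, gv1_0_3, gv1_0_4, gv1_0_5, gv1_0_6, gv1_0_7, gv1_0_8, gv1_0_9, gv1_0_10, gv1_0_11, gv1_1_0, gv1_1_1, gv1_1_2, gv1_1_3, gv1_1_4, gv1_1_5, gv1_1_6, gv1_1_7, gv1_1_8, gv1_1_9, gv1_1_10, gv1_1_11, gv1_2_0, gv1_2_1, gv1_2_2, gv1_2_3, gv1_2_4, gv1_2_5, gv1_2_6, gv1_2_7, gv1_2_8, gv1_2_9, gv1_2_10, gv1_2_11, gv1_3_0, gv1_3_1, gv1_3_2, gv1_3_3, gv1_3_4, gv1_3_5, gv1_3_6, gv1_3_7, gv1_3_8, gv1_3_9, gv1_3_10, gv1_3_11,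 gv1_4_0, gv1_4_1, gv1_4_2, gv1_4_3, gv1_4_4, gv1_4_5, gv1_4_6, gv1_4_7, gv1_4_8, gv1_4_9, gv1_4_10, gv1_4_11, gv1_5_0, gv1_5_1, gv1_5_2, gv1_5_3, gv1_5_4, gv1_5_5, gv1_5_6, gv1_5_7, gv1_5_8, gv1_5_9, gv1_5_10, gv1_5_11, bv2_0, bv2_1, bv2_2, bv2_3, bv2_4, bv2_5, bv2_6, bv2_7, bv2_8, bv2_9, bv2_10, bv2_11, gv2_0_0, gv2_0_1, gv2_0_2, gv2_0_3, gv2_0_4, gv2_0_5, gv2_0_6, gv2_0_7, gv2_0_8, gv2_0_9, gv2_0_10, gv2_0_11, gv2_1_0, gv2_1_1, gv2_1_2, gv2_1_3, gv2_1_4, gv2_1_5, gv2_1_6, gv2_1_7, gv2_1_8, gv2_1_9, gv2_1_10, gv2_1_11, gv2_2_0, gv2_2_1, gv2_2_2, gv2_2_3, gv2_2_4, gv2_2_5, gv2_2_6, gv2_2_7, gv2_2_8, gv2_2_9, gv2_2_10, gv2_2_11, gv2_3_0, gv2_3_1, gv2_3_2, gv2_3_3, gv2_3_4, gv2_3_5,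 gv2_3_6, gv2_3_7, gv2_3_8, gv2_3_9, gv2_3_10, gv2_3_11, gv2_4_0, gv2_4_1, gv2_4_2, gv2_4_3, gv2_4_4, gv2_4_5, gv2_4_6, gv2_4_7, gv2_4_8, gv2_4_9, gv2_4_10, gv2_4_11, gv2_5_0, gv2_5_1, gv2_5_2, gv2_5_3, gv2_5_4, gv2_5_5, gv2_5_6, gv2_5_7, gv2_5_8, gv2_5_9, gv2_5_10, gv2_5_11, bv3_0, bv3_1, bv3_2, bv3_3, bv3_4, bv3_5, bv3_6, bv3_7, bv3_8, bv3_9, bv3_10, bv3_11, gv3_0_0, gv3_0_1, gv3_0_2, gv3_0_3, gv3_0_4, gv3_0_5, gv3_0_6, gv3_0_7, gv3_0_8, gv3_0_9, gv3_0_10, gv3_0_11, gv3_1_0, gv3_1_1, gv3_1_2, gv3_1_3, gv3_1_4, gv3_1_5, gv3_1_6, gv3_1_7, gv3_1_8, gv3_1_9, gv3_1_10, gv3_1_11, gv3_2_0, gv3_2_1, gv3_2_2, gv3_2_3, gv3_2_4, gv3_2_5, gv3_2_6, gv3_2_7, gv3_2_8, gv3_2_9, gv3_2_10, gv3_2_11,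 gv3_3_0, gv3_3_1, gv3_3_2, gv3_3_3, gv3_3_4, gv3_3_5, gv3_3_6, gv3_3_7, gv3_3_8, gv3_3_9, gv3_3_10, gv3_3_11, gv3_4_0, gv3_4_1, gv3_4_2, gv3_4_3, gv3_4_4, gv3_4_5, gv3_4_6, gv3_4_7, gv3_4_8, gv3_4_9, gv3_4_10, gv3_4_11, gv3_5_0, gv3_5_1, gv3_5_2, gv3_5_3, gv3_5_4, gv3_5_5, gv3_5_6, gv3_5_7, gv3_5_8, gv3_5_9, gv3_5_10, gv3_5_11, bv4_0, bv4_1, bv4_2, bv4_3, bv4_4, bv4_5, bv4_6, bv4_7, bv4_8, bv4_9, bv4_10, bv4_11, gv4_0_0, gv4_0_1, gv4_0_2, gv4_0_3, gv4_0_4, gv4_0_5, gv4_0_6, gv4_0_7, gv4_0_8, gv4_0_9, gv4_0_10, gv4_0_11, gv4_1_0, gv4_1_1, gv4_1_2, gv4_1_3, gv4_1_4, gv4_1_5, gv4_1_6, gv4_1_7, gv4_1_8, gv4_1_9, gv4_1_10, gv4_1_11, gv4_2_0, gv4_2_1, gv4_2_2, gv4_2_3, gv4_2_4, gv4_2_5,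 gv4_2_6, gv4_2_7, gv4_2_8, gv4_2_9, gv4_2_10, gv4_2_11, gv4_3_0, gv4_3_1, gv4_3_2, gv4_3_3, gv4_3_4, gv4_3_5, gv4_3_6, gv4_3_7, gv4_3_8, gv4_3_9, gv4_3_10, gv4_3_11, gv4_4_0, gv4_4_1, gv4_4_2, gv4_4_3, gv4_4_4, gv4_4_5, gv4_4_6, gv4_4_7, gv4_4_8, gv4_4_9, gv4_4_10, gv4_4_11, gv4_5_0, gv4_5_1, gv4_5_2, gv4_5_3, gv4_5_4, gv4_5_5, gv4_5_6, gv4_5_7, gv4_5_8, gv4_5_9, gv4_5_10, gv4_5_11, bv5_0, bv5_1, bv5_2, bv5_3, bv5_4, bv5_5, bv5_6, bv5_7, bv5_8, bv5_9, bv5_10, bv5_11, gv5_0_0, gv5_0_1, gv5_0_2, gv5_0_3, gv5_0_4, gv5_0_5, gv5_0_6, gv5_0_7, gv5_0_8, gv5_0_9, gv5_0_10, gv5_0_11, gv5_1_0, gv5_1_1, gv5_1_2, gv5_1_3, gv5_1_4, gv5_1_5, gv5_1_6, gv5_1_7, gv5_1_8, gv5_1_9, gv5_1_10, gv5_1_11,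 gv5_2_0, gv5_2_1, gv5_2_2, gv5_2_3, gv5_2_4, gv5_2_5, gv5_2_6, gv5_2_7, gv5_2_8, gv5_2_9, gv5_2_10, gv5_2_11, gv5_3_0, gv5_3_1, gv5_3_2, gv5_3_3, gv5_3_4, gv5_3_5, gv5_3_6, gv5_3_7, gv5_3_8, gv5_3_9, gv5_3_10, gv5_3_11, gv5_4_0, gv5_4_1, gv5_4_2, gv5_4_3, gv5_4_4, gv5_4_5, gv5_4_6, gv5_4_7, gv5_4_8, gv5_4_9, gv5_4_10, gv5_4_11, gv5_5_0, gv5_5_1, gv5_5_2, gv5_5_3, gv5_5_4, gv5_5_5, gv5_5_6, gv5_5_7, gv5_5_8, gv5_5_9, gv5_5_10, gv5_5_11, bv6_0, bv6_1, bv6_2, bv6_3, bv6_4, bv6_5, bv6_6, bv6_7, bv6_8, bv6_9, bv6_10, bv6_11, gv6_0_0, gv6_0_1, gv6_0_2, gv6_0_3, gv6_0_4, gv6_0_5, gv6_0_6, gv6_0_7, gv6_0_8, gv6_0_9, gv6_0_10, gv6_0_11, gv6_1_0, gv6_1_1, gv6_1_2, gv6_1_3, gv6_1_4, gv6_1_5,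 gv6_1_6, gv6_1_7, gv6_1_8, gv6_1_9, gv6_1_10, gv6_1_11, gv6_2_0, gv6_2_1, gv6_2_2, gv6_2_3, gv6_2_4, gv6_2_5, gv6_2_6, gv6_2_7, gv6_2_8, gv6_2_9, gv6_2_10, gv6_2_11, gv6_3_0, gv6_3_1, gv6_3_2, gv6_3_3, gv6_3_4, gv6_3_5, gv6_3_6, gv6_3_7, gv6_3_8, gv6_3_9, gv6_3_10, gv6_3_11, gv6_4_0, gv6_4_1, gv6_4_2, gv6_4_3, gv6_4_4, gv6_4_5, gv6_4_6, gv6_4_7, gv6_4_8, gv6_4_9, gv6_4_10, gv6_4_11, gv6_5_0, gv6_5_1, gv6_5_2, gv6_5_3, gv6_5_4, gv6_5_5, gv6_5_6, gv6_5_7, gv6_5_8, gv6_5_9, gv6_5_10, gv6_5_11, bv7_0, bv7_1, bv7_2, bv7_3, bv7_4, bv7_5, bv7_6, bv7_7, bv7_8, bv7_9, bv7_10, bv7_11, gv7_0_0, gv7_0_1, gv7_0_2, gv7_0_3, gv7_0_4, gv7_0_5, gv7_0_6, gv7_0_7, gv7_0_8, gv7_0_9, gv7_0_10, gv7_0_11,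 gv7_1_0, gv7_1_1, gv7_1_2, gv7_1_3, gv7_1_4, gv7_1_5, gv7_1_6, gv7_1_7, gv7_1_8, gv7_1_9, gv7_1_10, gv7_1_11, gv7_2_0, gv7_2_1, gv7_2_2, gv7_2_3, gv7_2_4, gv7_2_5, gv7_2_6, gv7_2_7, gv7_2_8, gv7_2_9, gv7_2_10, gv7_2_11, gv7_3_0, gv7_3_1, gv7_3_2, gv7_3_3, gv7_3_4, gv7_3_5, gv7_3_6, gv7_3_7, gv7_3_8, gv7_3_9, gv7_3_10, gv7_3_11, gv7_4_0, gv7_4_1, gv7_4_2, gv7_4_3, gv7_4_4, gv7_4_5, gv7_4_6, gv7_4_7, gv7_4_8, gv7_4_9, gv7_4_10, gv7_4_11, gv7_5_0, gv7_5_1, gv7_5_2, gv7_5_3, gv7_5_4, gv7_5_5, gv7_5_6, gv7_5_7, gv7_5_8, gv7_5_9, gv7_5_10, gv7_5_11] at h0 h1 h2 h3 h4 h5 h6 h7 h8 h9 h10 h11 <;>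
    first
      | (refine ⟨rfl, funext6 ?_ ?_ ?_ ?_ ?_ ?_⟩ <;> omega)
      | (exfalso; omega)

set_option maxHeartbeats 4000000 in
theorem eight_types (x : Fin 12 → ℕ) (r : ℕ) (h : IsMagic x r) :
    ∃! p : Fin 8 × (Fin 6 → ℕ), x = rep p.1 p.2 := by
  obtain ⟨h1, h2, h3, h4, h5, h6, h7, h8⟩ := h
  have key : ∃ t : Fin 8, ∃ k : Fin 6 → ℕ, x = rep t k := by
    by_cases c0 : x 2 ≤ x 1 ∧ x 2 + r ≤ x 1 + x 3 + x 4
    · exact ⟨0, ![x 2, x 0 + x 2 - x 4, r - (x 1 + x 3), x 1 - x 2, x 1 + x 3 + x 4 - (x 2 + r), r - (x 0 + x 1)], by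
          refine funext12 ?_ ?_ ?_ ?_ ?_ ?_ ?_ ?_ ?_ ?_ ?_ ?_ <;>
            simp only [rep_apply, kv0, kv1, kv2, kv3, kv4, kv5, bv0_0, bv0_1, bv0_2, bv0_3, bv0_4, bv0_5, bv0_6, bv0_7, bv0_8, bv0_9, bv0_10, bv0_11, gv0_0_0, gv0_0_1, gv0_0_2, gv0_0_3, gv0_0_4, gv0_0_5, gv0_0_6, gv0_0_7, gv0_0_8, gv0_0_9, gv0_0_10, gv0_0_11, gv0_1_0, gv0_1_1, gv0_1_2, gv0_1_3, gv0_1_4, gv0_1_5, gv0_1_6, gv0_1_7, gv0_1_8, gv0_1_9, gv0_1_10, gv0_1_11, gv0_2_0, gv0_2_1, gv0_2_2, gv0_2_3, gv0_2_4, gv0_2_5, gv0_2_6, gv0_2_7, gv0_2_8, gv0_2_9, gv0_2_10, gv0_2_11, gv0_3_0, gv0_3_1, gv0_3_2, gv0_3_3, gv0_3_4, gv0_3_5, gv0_3_6, gv0_3_7, gv0_3_8, gv0_3_9, gv0_3_10, gv0_3_11, gv0_4_0, gv0_4_1, gv0_4_2, gv0_4_3, gv0_4_4, gv0_4_5, gv0_4_6,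 gv0_4_7, gv0_4_8, gv0_4_9, gv0_4_10, gv0_4_11, gv0_5_0, gv0_5_1, gv0_5_2, gv0_5_3, gv0_5_4, gv0_5_5, gv0_5_6, gv0_5_7, gv0_5_8, gv0_5_9, gv0_5_10, gv0_5_11] <;> omega⟩
    by_cases c1 : x 1 < x 2 ∧ x 1 + r ≤ x 2 + x 3 + x 4
    · exact ⟨1, ![x 1, x 0 + x 1 - x 4, r - (x 2 + x 3), x 2 + x 3 + x 4 - (x 1 + r), r - (x 0 + x 2), x 2 - (x 1 + 1)], by
          refine funext12 ?_ ?_ ?_ ?_ ?_ ?_ ?_ ?_ ?_ ?_ ?_ ?_ <;>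
            simp only [rep_apply, kv0, kv1, kv2, kv3, kv4, kv5, bv1_0, bv1_1, bv1_2, bv1_3, bv1_4, bv1_5, bv1_6, bv1_7, bv1_8, bv1_9, bv1_10, bv1_11, gv1_0_0, gv1_0_1, gv1_0_2, gv1_0_3, gv1_0_4, gv1_0_5, gv1_0_6, gv1_0_7, gv1_0_8, gv1_0_9, gv1_0_10, gv1_0_11, gv1_1_0, gv1_1_1, gv1_1_2, gv1_1_3, gv1_1_4, gv1_1_5, gv1_1_6, gv1_1_7, gv1_1_8, gv1_1_9, gv1_1_10, gv1_1_11, gv1_2_0, gv1_2_1, gv1_2_2, gv1_2_3, gv1_2_4, gv1_2_5, gv1_2_6, gv1_2_7, gv1_2_8, gv1_2_9, gv1_2_10, gv1_2_11, gv1_3_0, gv1_3_1, gv1_3_2, gv1_3_3, gv1_3_4, gv1_3_5, gv1_3_6, gv1_3_7, gv1_3_8, gv1_3_9, gv1_3_10, gv1_3_11, gv1_4_0, gv1_4_1, gv1_4_2, gv1_4_3, gv1_4_4, gv1_4_5, gv1_4_6, gv1_4_7, gv1_4_8, gv1_4_9, gv1_4_10, gv1_4_11, gv1_5_0, gv1_5_1,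 gv1_5_2, gv1_5_3, gv1_5_4, gv1_5_5, gv1_5_6, gv1_5_7, gv1_5_8, gv1_5_9, gv1_5_10, gv1_5_11] <;> omega⟩
    by_cases c2 : x 4 ≤ x 0 ∧ x 1 + x 2 + x 3 + x 4 < r
    · exact ⟨2, ![x 0 - x 4, x 4, x 1, x 3 + x 4 - x 0, x 2, r - (x 1 + x 2 + x 3 + x 4 + 1)], by
          refine funext12 ?_ ?_ ?_ ?_ ?_ ?_ ?_ ?_ ?_ ?_ ?_ ?_ <;>
            simp only [rep_apply, kv0, kv1, kv2, kv3, kv4, kv5, bv2_0, bv2_1, bv2_2, bv2_3, bv2_4, bv2_5, bv2_6, bv2_7, bv2_8, bv2_9, bv2_10, bv2_11, gv2_0_0, gv2_0_1, gv2_0_2, gv2_0_3, gv2_0_4, gv2_0_5, gv2_0_6, gv2_0_7, gv2_0_8, gv2_0_9, gv2_0_10, gv2_0_11, gv2_1_0, gv2_1_1, gv2_1_2, gv2_1_3, gv2_1_4, gv2_1_5, gv2_1_6, gv2_1_7, gv2_1_8, gv2_1_9, gv2_1_10, gv2_1_11, gv2_2_0, gv2_2_1, gv2_2_2, gv2_2_3,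 gv2_2_4, gv2_2_5, gv2_2_6, gv2_2_7, gv2_2_8, gv2_2_9, gv2_2_10, gv2_2_11, gv2_3_0, gv2_3_1, gv2_3_2, gv2_3_3, gv2_3_4, gv2_3_5, gv2_3_6, gv2_3_7, gv2_3_8, gv2_3_9, gv2_3_10, gv2_3_11, gv2_4_0, gv2_4_1, gv2_4_2, gv2_4_3, gv2_4_4, gv2_4_5, gv2_4_6, gv2_4_7, gv2_4_8, gv2_4_9, gv2_4_10, gv2_4_11, gv2_5_0, gv2_5_1, gv2_5_2, gv2_5_3, gv2_5_4, gv2_5_5, gv2_5_6, gv2_5_7, gv2_5_8, gv2_5_9, gv2_5_10, gv2_5_11] <;> omega⟩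
    by_cases c3 : x 0 < x 4 ∧ 2*x 0 + x 1 + x 2 + x 3 < x 4 + r
    · exact ⟨3, ![x 4 - (x 0 + 1), x 0, x 0 + x 1 - x 4, x 3, x 0 + x 2 - x 4, x 4 + r - (2*x 0 + x 1 + x 2 + x 3 + 1)], by
          refine funext12 ?_ ?_ ?_ ?_ ?_ ?_ ?_ ?_ ?_ ?_ ?_ ?_ <;>
            simp only [rep_apply, kv0, kv1, kv2, kv3, kv4, kv5, bv3_0, bv3_1, bv3_2, bv3_3, bv3_4, bv3_5, bv3_6, bv3_7, bv3_8, bv3_9, bv3_10, bv3_11, gv3_0_0, gv3_0_1, gv3_0_2, gv3_0_3, gv3_0_4, gv3_0_5, gv3_0_6, gv3_0_7, gv3_0_8, gv3_0_9, gv3_0_10, gv3_0_11, gv3_1_0, gv3_1_1, gv3_1_2, gv3_1_3, gv3_1_4, gv3_1_5, gv3_1_6, gv3_1_7, gv3_1_8, gv3_1_9, gv3_1_10, gv3_1_11, gv3_2_0, gv3_2_1, gv3_2_2, gv3_2_3, gv3_2_4, gv3_2_5, gv3_2_6, gv3_2_7, gv3_2_8, gv3_2_9, gv3_2_10, gv3_2_11,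 gv3_3_0, gv3_3_1, gv3_3_2, gv3_3_3, gv3_3_4, gv3_3_5, gv3_3_6, gv3_3_7, gv3_3_8, gv3_3_9, gv3_3_10, gv3_3_11, gv3_4_0, gv3_4_1, gv3_4_2, gv3_4_3, gv3_4_4, gv3_4_5, gv3_4_6, gv3_4_7, gv3_4_8, gv3_4_9, gv3_4_10, gv3_4_11, gv3_5_0, gv3_5_1, gv3_5_2, gv3_5_3, gv3_5_4, gv3_5_5, gv3_5_6, gv3_5_7, gv3_5_8, gv3_5_9, gv3_5_10, gv3_5_11] <;> omega⟩
    by_cases c4 : x 0 < x 3 ∧ x 4 + r < x 1 + x 2 + x 3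
    · exact ⟨4, ![x 4, x 0, r - (x 2 + x 3), x 3 - (x 0 + 1), r - (x 1 + x 3), x 1 + x 2 + x 3 - (x 4 + r + 1)], by
          refine funext12 ?_ ?_ ?_ ?_ ?_ ?_ ?_ ?_ ?_ ?_ ?_ ?_ <;>
            simp only [rep_apply, kv0, kv1, kv2, kv3, kv4, kv5, bv4_0, bv4_1, bv4_2, bv4_3, bv4_4, bv4_5, bv4_6, bv4_7, bv4_8, bv4_9, bv4_10, bv4_11, gv4_0_0, gv4_0_1, gv4_0_2, gv4_0_3, gv4_0_4, gv4_0_5, gv4_0_6, gv4_0_7, gv4_0_8, gv4_0_9, gv4_0_10, gv4_0_11, gv4_1_0, gv4_1_1, gv4_1_2, gv4_1_3, gv4_1_4, gv4_1_5, gv4_1_6, gv4_1_7, gv4_1_8, gv4_1_9, gv4_1_10, gv4_1_11, gv4_2_0, gv4_2_1, gv4_2_2, gv4_2_3, gv4_2_4, gv4_2_5, gv4_2_6, gv4_2_7, gv4_2_8, gv4_2_9, gv4_2_10, gv4_2_11, gv4_3_0, gv4_3_1, gv4_3_2, gv4_3_3, gv4_3_4, gv4_3_5, gv4_3_6, gv4_3_7,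 gv4_3_8, gv4_3_9, gv4_3_10, gv4_3_11, gv4_4_0, gv4_4_1, gv4_4_2, gv4_4_3, gv4_4_4, gv4_4_5, gv4_4_6, gv4_4_7, gv4_4_8, gv4_4_9, gv4_4_10, gv4_4_11, gv4_5_0, gv4_5_1, gv4_5_2, gv4_5_3, gv4_5_4, gv4_5_5, gv4_5_6, gv4_5_7, gv4_5_8, gv4_5_9, gv4_5_10, gv4_5_11] <;> omega⟩
    by_cases c5 : x 3 ≤ x 0 ∧ x 3 + x 4 + r < 2*x 0 + x 1 + x 2
    · exact ⟨5, ![x 3 + x 4 - x 0, x 3, x 0 - x 3, r - (x 0 + x 2), r - (x 0 + x 1), 2*x 0 + x 1 + x 2 - (x 3 + x 4 + r + 1)], by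
          refine funext12 ?_ ?_ ?_ ?_ ?_ ?_ ?_ ?_ ?_ ?_ ?_ ?_ <;>
            simp only [rep_apply, kv0, kv1, kv2, kv3, kv4, kv5, bv5_0, bv5_1, bv5_2, bv5_3, bv5_4, bv5_5, bv5_6, bv5_7, bv5_8, bv5_9, bv5_10, bv5_11, gv5_0_0, gv5_0_1, gv5_0_2, gv5_0_3, gv5_0_4, gv5_0_5, gv5_0_6, gv5_0_7, gv5_0_8, gv5_0_9, gv5_0_10, gv5_0_11, gv5_1_0, gv5_1_1, gv5_1_2, gv5_1_3, gv5_1_4, gv5_1_5, gv5_1_6, gv5_1_7, gv5_1_8, gv5_1_9, gv5_1_10, gv5_1_11, gv5_2_0, gv5_2_1, gv5_2_2, gv5_2_3, gv5_2_4, gv5_2_5, gv5_2_6, gv5_2_7, gv5_2_8, gv5_2_9, gv5_2_10, gv5_2_11, gv5_3_0, gv5_3_1, gv5_3_2, gv5_3_3, gv5_3_4, gv5_3_5, gv5_3_6, gv5_3_7, gv5_3_8, gv5_3_9, gv5_3_10, gv5_3_11, gv5_4_0, gv5_4_1, gv5_4_2, gv5_4_3, gv5_4_4, gv5_4_5, gv5_4_6,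 gv5_4_7, gv5_4_8, gv5_4_9, gv5_4_10, gv5_4_11, gv5_5_0, gv5_5_1, gv5_5_2, gv5_5_3, gv5_5_4, gv5_5_5, gv5_5_6, gv5_5_7, gv5_5_8, gv5_5_9, gv5_5_10, gv5_5_11] <;> omega⟩
    have n0 : r ≤ x 1 + x 2 + x 3 + x 4 := by omega
    have n1 : x 4 + r ≤ 2*x 0 + x 1 + x 2 + x 3 := by omega
    have n2 : x 1 + x 2 + x 3 ≤ x 4 + r := by omega
    have n3 : x 2 + x 3 + x 4 + 1 ≤ x 1 + r := by omega
    have n4 : 2*x 0 + x 1 + x 2 ≤ x 3 + x 4 + r := by omega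
    have n5 : x 1 + x 3 + x 4 + 1 ≤ x 2 + r := by omega
    clear c0 c1 c2 c3 c4 c5
    by_cases hpar : (x 1 + x 2 + x 3 + x 4 + r) % 2 = 0
    · obtain ⟨q0, hq0⟩ : ∃ m, x 1 + x 2 + x 3 + x 4 = r + 2*m := ⟨(x 1 + x 2 + x 3 + x 4 - r)/2, by omega⟩
      obtain ⟨q1, hq1⟩ : ∃ m, 2*x 0 + x 1 + x 2 + x 3 = x 4 + r + 2*m := ⟨(2*x 0 + x 1 + x 2 + x 3 - (x 4 + r))/2, by omega⟩
      obtain ⟨q2, hq2⟩ : ∃ m, x 4 + r = x 1 + x 2 + x 3 + 2*m := ⟨(x 4 + r - (x 1 + x 2 + x 3))/2, by omega⟩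
      obtain ⟨q3, hq3⟩ : ∃ m, x 1 + r = x 2 + x 3 + x 4 + 2 + 2*m := ⟨(x 1 + r - (x 2 + x 3 + x 4 + 2))/2, by omega⟩
      obtain ⟨q4, hq4⟩ : ∃ m, x 3 + x 4 + r = 2*x 0 + x 1 + x 2 + 2*m := ⟨(x 3 + x 4 + r - (2*x 0 + x 1 + x 2))/2, by omega⟩
      obtain ⟨q5, hq5⟩ : ∃ m, x 2 + r = x 1 + x 3 + x 4 + 2 + 2*m := ⟨(x 2 + r - (x 1 + x 3 + x 4 + 2))/2, by omega⟩
      exact ⟨6, ![q0, q1, q2, q3, q4, q5], by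
        refine funext12 ?_ ?_ ?_ ?_ ?_ ?_ ?_ ?_ ?_ ?_ ?_ ?_ <;>
          simp only [rep_apply, kv0, kv1, kv2, kv3, kv4, kv5, bv6_0, bv6_1, bv6_2, bv6_3, bv6_4, bv6_5, bv6_6, bv6_7, bv6_8, bv6_9, bv6_10, bv6_11, gv6_0_0, gv6_0_1, gv6_0_2, gv6_0_3, gv6_0_4, gv6_0_5, gv6_0_6, gv6_0_7, gv6_0_8, gv6_0_9, gv6_0_10, gv6_0_11, gv6_1_0, gv6_1_1, gv6_1_2, gv6_1_3, gv6_1_4, gv6_1_5, gv6_1_6, gv6_1_7, gv6_1_8, gv6_1_9, gv6_1_10, gv6_1_11, gv6_2_0, gv6_2_1, gv6_2_2, gv6_2_3, gv6_2_4, gv6_2_5, gv6_2_6, gv6_2_7, gv6_2_8, gv6_2_9, gv6_2_10, gv6_2_11, gv6_3_0, gv6_3_1, gv6_3_2, gv6_3_3, gv6_3_4, gv6_3_5, gv6_3_6, gv6_3_7, gv6_3_8, gv6_3_9, gv6_3_10, gv6_3_11, gv6_4_0, gv6_4_1, gv6_4_2, gv6_4_3, gv6_4_4, gv6_4_5, gv6_4_6,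 gv6_4_7, gv6_4_8, gv6_4_9, gv6_4_10, gv6_4_11, gv6_5_0, gv6_5_1, gv6_5_2, gv6_5_3, gv6_5_4, gv6_5_5, gv6_5_6, gv6_5_7, gv6_5_8, gv6_5_9, gv6_5_10, gv6_5_11] <;> omega⟩
    · obtain ⟨q0, hq0⟩ : ∃ m, x 1 + x 2 + x 3 + x 4 = r + 1 + 2*m := ⟨(x 1 + x 2 + x 3 + x 4 - (r + 1))/2, by omega⟩
      obtain ⟨q1, hq1⟩ : ∃ m, 2*x 0 + x 1 + x 2 + x 3 = x 4 + r + 1 + 2*m := ⟨(2*x 0 + x 1 + x 2 + x 3 - (x 4 + r + 1))/2, by omega⟩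
      obtain ⟨q2, hq2⟩ : ∃ m, x 4 + r = x 1 + x 2 + x 3 + 1 + 2*m := ⟨(x 4 + r - (x 1 + x 2 + x 3 + 1))/2, by omega⟩
      obtain ⟨q3, hq3⟩ : ∃ m, x 1 + r = x 2 + x 3 + x 4 + 1 + 2*m := ⟨(x 1 + r - (x 2 + x 3 + x 4 + 1))/2, by omega⟩
      obtain ⟨q4, hq4⟩ : ∃ m, x 3 + x 4 + r = 2*x 0 + x 1 + x 2 + 1 + 2*m := ⟨(x 3 + x 4 + r - (2*x 0 + x 1 + x 2 + 1))/2, by omega⟩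
      obtain ⟨q5, hq5⟩ : ∃ m, x 2 + r = x 1 + x 3 + x 4 + 1 + 2*m := ⟨(x 2 + r - (x 1 + x 3 + x 4 + 1))/2, by omega⟩
      exact ⟨7, ![q0, q1, q2, q3, q4, q5], by
        refine funext12 ?_ ?_ ?_ ?_ ?_ ?_ ?_ ?_ ?_ ?_ ?_ ?_ <;>
          simp only [rep_apply, kv0, kv1, kv2, kv3, kv4, kv5, bv7_0, bv7_1, bv7_2, bv7_3, bv7_4, bv7_5, bv7_6, bv7_7, bv7_8, bv7_9, bv7_10, bv7_11, gv7_0_0, gv7_0_1, gv7_0_2, gv7_0_3, gv7_0_4, gv7_0_5, gv7_0_6, gv7_0_7, gv7_0_8, gv7_0_9, gv7_0_10, gv7_0_11, gv7_1_0, gv7_1_1, gv7_1_2, gv7_1_3, gv7_1_4, gv7_1_5, gv7_1_6, gv7_1_7, gv7_1_8, gv7_1_9, gv7_1_10, gv7_1_11, gv7_2_0, gv7_2_1, gv7_2_2, gv7_2_3, gv7_2_4, gv7_2_5, gv7_2_6, gv7_2_7, gv7_2_8, gv7_2_9, gv7_2_10, gv7_2_11, gv7_3_0, gv7_3_1, gv7_3_2,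 gv7_3_3, gv7_3_4, gv7_3_5, gv7_3_6, gv7_3_7, gv7_3_8, gv7_3_9, gv7_3_10, gv7_3_11, gv7_4_0, gv7_4_1, gv7_4_2, gv7_4_3, gv7_4_4, gv7_4_5, gv7_4_6, gv7_4_7, gv7_4_8, gv7_4_9, gv7_4_10, gv7_4_11, gv7_5_0, gv7_5_1, gv7_5_2, gv7_5_3, gv7_5_4, gv7_5_5, gv7_5_6, gv7_5_7, gv7_5_8, gv7_5_9, gv7_5_10, gv7_5_11] <;> omega⟩
  obtain ⟨t, k, hk⟩ := key
  refine ⟨(t, k), hk, ?_⟩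
  rintro ⟨t', k'⟩ hq
  have hre := rep_inj (hq.symm.trans hk : rep t' k' = rep t k)
  simp only [Prod.mk.injEq]
  exact hre
end

section
/- The all-ones labelling T = (1,1,...,1) is a magic labelling of the cube with magic sum 3, and it cannot be written as k1α1+...+k6α6 with all k_i ∈ N (i.e., it is of type t352 with all k_i = 0). -/
theorem T_magic_but_not_nat_combo :
    IsMagic T 3 ∧
    ¬ ∃ k : Fin 6 → ℕ,
        T = k 0 • a1 + k 1 • a2 + k 2 • a3 + k 3 • a4 + k 4 • a5 + k 5 • a6 := by
  constructor
  · exact ⟨rfl, rfl, rfl, rfl, rfl, rfl, rfl, rfl⟩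
  · rintro ⟨k, hk⟩
    have h0 := congrFun hk 0
    have h2 := congrFun hk 2
    have h6 := congrFun hk 6
    have h8 := congrFun hk 8
    have h9 := congrFun hk 9
    have h10 := congrFun hk 10
    simp only [Pi.add_apply, Pi.smul_apply, smul_eq_mul] at h0 h2 h6 h8 h9 h10
    simp only [T, show a1 0 = 0 from rfl, show a1 2 = 1 from rfl, show a1 6 = 0 from rfl, show a1 8 = 0 from rfl, show a1 9 = 0 from rfl, show a1 10 = 0 from rfl, show a2 0 = 1 from rfl, show a2 2 = 0 from rfl, show a2 6 = 1 from rfl, show a2 8 = 0 from rfl, show a2 9 = 0 from rfl, show a2 10 = 0 from rfl, show a3 0 = 1 from rfl, show a3 2 = 0 from rfl, show a3 6 = 0 from rfl, show a3 8 = 0 from rfl, show a3 9 = 0 from rfl, show a3 10 = 1 from rfl, show a4 0 = 0 from rfl, show a4 2 = 0 from rfl, show a4 6 = 0 from rfl, show a4 8 = 0 from rfl, show a4 9 = 1 from rfl, show a4 10 = 1 from rfl, show a5 0 = 1 from rfl, show a5 2 = 0 from rfl, show a5 6 = 0 from rfl, show a5 8 = 0 from rfl, show a5 9 = 0 from rfl,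 show a5 10 = 0 from rfl, show a6 0 = 0 from rfl, show a6 2 = 0 from rfl, show a6 6 = 0 from rfl, show a6 8 = 1 from rfl, show a6 9 = 1 from rfl, show a6 10 = 0 from rfl, mul_one, mul_zero] at h0 h2 h6 h8 h9 h10
    omega
end
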